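/- arXiv:1509.01301 — 8 statements merged into one kernel-verified Lean document; each statement's English description precedes it below -/
import Mathlib

section
/- If a partially oriented graph P has an excellent cyclic ordering O of its vertices, then the unoriented edges of P can be oriented so that O remains an excellent cyclic ordering of the resulting oriented graph. -/
/-- An oriented graph: an asymmetric (hence irreflexive) arc relation. -/
def IsOrientedGraph {V : Type*} (A : V → V → Prop) : Prop :=
  ∀ u v : V, A u v → ¬ A v u

/-- A tournament: an oriented graph with an arc between any two distinct vertices. -/
def IsTournament {V : Type*} (A : V → V → Prop) : Prop :=
  IsOrientedGraph A ∧ ∀ u v : V, u ≠ v → A u v ∨ A v u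

/-- A local tournament: every out-neighbourhood and every in-neighbourhood
induces a tournament. -/
def IsLocalTournament {V : Type*} (A : V → V → Prop) : Prop :=
  IsOrientedGraph A ∧
  (∀ v x y : V, A v x → A v y → x ≠ y → A x y ∨ A y x) ∧
  (∀ v x y : V, A x v → A y v → x ≠ y → A x y ∨ A y x)

/-- Local transitivity: the arc relation is transitive when restricted to the
out-neighbourhood of any vertex and to the in-neighbourhood of any vertex
(so these neighbourhoods induce transitive, i.e. triangle-free, subtournaments). -/
def IsLocallyTransitive {V : Type*} (A : V → V → Prop) : Prop :=
  (∀ v x y z : V, A v x → A v y → A v z → A x y → A y z → A x z) ∧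
  (∀ v x y z : V, A x v → A y v → A z v → A x y → A y z → A x z)

/-- A directed cycle of `A` all of whose vertices lie in `S`. -/
def HasCycleIn {V : Type*} (A : V → V → Prop) (S : Set V) : Prop :=
  ∃ (n : ℕ) (f : ZMod n → V), 2 ≤ n ∧ Function.Injective f ∧
    (∀ i, f i ∈ S) ∧ ∀ i : ZMod n, A (f i) (f (i + 1))

/-- A directed cycle somewhere in `A`. -/
def HasDirectedCycle {V : Type*} (A : V → V → Prop) : Prop :=
  HasCycleIn A Set.univ

/-- A partially oriented graph (pog): a symmetric loopless edge relation `E`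
together with an asymmetric arc relation `A`, no pair of vertices being joined
by both an edge and an arc. -/
def IsPog {V : Type*} (E A : V → V → Prop) : Prop :=
  (∀ u v : V, E u v → E v u) ∧ (∀ v : V, ¬ E v v) ∧ IsOrientedGraph A ∧
  (∀ u v : V, E u v → ¬ A u v ∧ ¬ A v u)

/-- `D` is a completion of the pog `(E, A)`: it keeps every arc of `A`,
orients every edge of `E` (in exactly one direction), and contains nothing else. -/
def IsCompletion {V : Type*} (E A D : V → V → Prop) : Prop :=
  IsOrientedGraph D ∧
  (∀ u v : V, A u v → D u v) ∧
  (∀ u v : V, E u v → D u v ∨ D v u) ∧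
  (∀ u v : V, D u v → A u v ∨ E u v)

/-- `T` is obtained from the oriented graph `A` by adding arcs between
non-adjacent pairs only (no arc of `A` is reversed), the result being a
tournament.  This is exactly a completion of the partially oriented complete
graph `A^c` to a tournament. -/
def CompletesToTournament {V : Type*} (A T : V → V → Prop) : Prop :=
  (∀ u v : V, A u v → T u v) ∧ (∀ u v : V, T u v → ¬ A v u) ∧ IsTournament T

/-- A round ordering of the arc relation `A`: a cyclic ordering (a bijection
from `ZMod n`) in which the out-neighbours of each vertex appear consecutively
immediately after it and its in-neighbours consecutively immediately before it. -/
def IsRoundOrdering {V : Type*} (A : V → V → Prop) {n : ℕ} (f : ZMod n → V) : Prop :=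
  Function.Bijective f ∧
  (∀ i j : ZMod n, A (f i) (f j) ↔ 1 ≤ (j - i).val ∧ (j - i).val ≤ {u | A (f i) u}.ncard) ∧
  (∀ i j : ZMod n, A (f j) (f i) ↔ 1 ≤ (i - j).val ∧ (i - j).val ≤ {u | A u (f i)}.ncard)

/-- The cyclic ordering given by `f : ZMod n → V` is excellent for the arc
relation `A`: there is no pair of arcs `(f i, f j)`, `(f s, f t)` whose vertices
occur in the cyclic order `f i, f t, f s, f j` (positions measured from `i`;
the degenerate cases `i = t` and `s = j` are allowed). -/
def IsExcellent {V : Type*} (A : V → V → Prop) {n : ℕ} (f : ZMod n → V) : Prop :=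
  ¬ ∃ i j s t : ZMod n, A (f i) (f j) ∧ A (f s) (f t) ∧
      (t - i).val ≤ (s - i).val ∧ (s - i).val ≤ (j - i).val

lemma zmod_sub_val_aux {n : ℕ} [NeZero n] (x y : ZMod n) :
    (y - x).val < n ∧ (x.val + (y - x).val = y.val ∨ x.val + (y - x).val = y.val + n) := by
  have h : ((y - x) + x).val = y.val := by rw [sub_add_cancel]
  rw [ZMod.val_add] at h
  have h1 : (y - x).val < n := ZMod.val_lt _
  have h2 : x.val < n := ZMod.val_lt _
  have h3 : y.val < n := ZMod.val_lt _
  refine ⟨h1, ?_⟩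
  rcases Nat.lt_or_ge ((y - x).val + x.val) n with hl | hg
  · rw [Nat.mod_eq_of_lt hl] at h; omega
  · rw [Nat.mod_eq_sub_mod hg, Nat.mod_eq_of_lt (by omega)] at h; omega

set_option maxHeartbeats 2000000 in
lemma key_lemma {n : ℕ} [NeZero n] (p q s t s' t' : ZMod n) (hpq : p ≠ q)
    (H1 : ((q - s).val ≤ (p - s).val ∧ (p - s).val ≤ (t - s).val) ∨
          ((t - p).val ≤ (s - p).val ∧ (s - p).val ≤ (q - p).val))
    (H2 : ((p - s').val ≤ (q - s').val ∧ (q - s').val ≤ (t' - s').val) ∨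
          ((t' - q).val ≤ (s' - q).val ∧ (s' - q).val ≤ (p - q).val)) :
    ((t' - s).val ≤ (s' - s).val ∧ (s' - s).val ≤ (t - s).val) ∨
    ((t - s').val ≤ (s - s').val ∧ (s - s').val ≤ (t' - s').val) ∨
    (t - s).val = 0 ∨ (t' - s').val = 0 := by
  have hpq' : p.val ≠ q.val := fun h => hpq (ZMod.val_injective n h)
  have d3 := zmod_sub_val_aux s t
  have d9 := zmod_sub_val_aux s' t'
  have d13 := zmod_sub_val_aux s t'
  have d14 := zmod_sub_val_aux s s'
  have d15 := zmod_sub_val_aux s' t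
  have d16 := zmod_sub_val_aux s' s
  have vp : p.val < n := ZMod.val_lt _
  have vq : q.val < n := ZMod.val_lt _
  have vs : s.val < n := ZMod.val_lt _
  have vt : t.val < n := ZMod.val_lt _
  have vs2 : s'.val < n := ZMod.val_lt _
  have vt2 : t'.val < n := ZMod.val_lt _
  rcases H1 with H1 | H1
  · have d1 := zmod_sub_val_aux s q
    have d2 := zmod_sub_val_aux s p
    rcases H2 with H2 | H2
    · have d7 := zmod_sub_val_aux s' p
      have d8 := zmod_sub_val_aux s' q
      omega
    · have d10 := zmod_sub_val_aux q t'
      have d11 := zmod_sub_val_aux q s'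
      have d12 := zmod_sub_val_aux q p
      omega
  · have d4 := zmod_sub_val_aux p t
    have d5 := zmod_sub_val_aux p s
    have d6 := zmod_sub_val_aux p q
    rcases H2 with H2 | H2
    · have d7 := zmod_sub_val_aux s' p
      have d8 := zmod_sub_val_aux s' q
      omega
    · have d10 := zmod_sub_val_aux q t'
      have d11 := zmod_sub_val_aux q s'
      have d12 := zmod_sub_val_aux q p
      omega

lemma edge_block_extract {V : Type*} {n : ℕ} [NeZero n] {A : V → V → Prop}
    {f : ZMod n → V} (hinj : Function.Injective f) {u v : V} {p q : ZMod n}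
    (hp : f p = u) (hq : f q = v) (hpq : p ≠ q)
    (h1 : ¬ IsExcellent (fun x y => A x y ∨ (x = u ∧ y = v)) f)
    (hex : IsExcellent A f) :
    ∃ s t : ZMod n, A (f s) (f t) ∧
      (((q - s).val ≤ (p - s).val ∧ (p - s).val ≤ (t - s).val) ∨
       ((t - p).val ≤ (s - p).val ∧ (s - p).val ≤ (q - p).val)) := by
  obtain ⟨i, j, s, t, ha1, ha2, hle1, hle2⟩ := not_not.mp h1
  rcases ha1 with hA1 | ⟨hiu, hjv⟩
  · rcases ha2 with hA2 | ⟨hsu, htv⟩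
    · exact absurd ⟨i, j, s, t, hA1, hA2, hle1, hle2⟩ hex
    · have hs : s = p := hinj (by rw [hsu, hp])
      have ht : t = q := hinj (by rw [htv, hq])
      rw [hs] at hle1 hle2
      rw [ht] at hle1
      exact ⟨i, j, hA1, Or.inl ⟨hle1, hle2⟩⟩
  · have hi : i = p := hinj (by rw [hiu, hp])
    have hj : j = q := hinj (by rw [hjv, hq])
    rw [hi] at hle1 hle2
    rw [hj] at hle2
    rcases ha2 with hA2 | ⟨hsu, htv⟩
    · exact ⟨s, t, hA2, Or.inr ⟨hle1, hle2⟩⟩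
    · have hs : s = p := hinj (by rw [hsu, hp])
      have ht : t = q := hinj (by rw [htv, hq])
      rw [hs, ht] at hle1
      exfalso
      rw [sub_self, ZMod.val_zero] at hle1
      exact hpq (sub_eq_zero.mp ((ZMod.val_eq_zero _).mp (Nat.le_zero.mp hle1))).symm

lemma choose_orientation {V : Type*} {n : ℕ} [NeZero n] {A : V → V → Prop}
    {f : ZMod n → V} (hbij : Function.Bijective f)
    (hex : IsExcellent A f) {u v : V} (huv : u ≠ v) :
    IsExcellent (fun x y => A x y ∨ (x = u ∧ y = v)) f ∨
    IsExcellent (fun x y => A x y ∨ (x = v ∧ y = u)) f := by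
  by_contra hcon
  push_neg at hcon
  obtain ⟨h1, h2⟩ := hcon
  obtain ⟨p, hp⟩ := hbij.surjective u
  obtain ⟨q, hq⟩ := hbij.surjective v
  have hpq : p ≠ q := fun h => huv (by rw [← hp, ← hq, h])
  obtain ⟨s, t, hst, H1⟩ := edge_block_extract hbij.injective hp hq hpq h1 hex
  obtain ⟨s', t', hst', H2⟩ := edge_block_extract hbij.injective hq hp hpq.symm h2 hex
  have H2' : ((p - s').val ≤ (q - s').val ∧ (q - s').val ≤ (t' - s').val) ∨
      ((t' - q).val ≤ (s' - q).val ∧ (s' - q).val ≤ (p - q).val) := by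
    rcases H2 with h | h
    · exact Or.inl h
    · exact Or.inr h
  rcases key_lemma p q s t s' t' hpq H1 H2' with h | h | h | h
  · exact hex ⟨s, t, s', t', hst, hst', h.1, h.2⟩
  · exact hex ⟨s', t', s, t, hst', hst, h.1, h.2⟩
  · have h0 : ((s : ZMod n) - s).val = 0 := by rw [sub_self, ZMod.val_zero]
    exact hex ⟨s, t, s, t, hst, hst, by omega, by omega⟩
  · have h0 : ((s' : ZMod n) - s').val = 0 := by rw [sub_self, ZMod.val_zero]
    exact hex ⟨s', t', s', t', hst', hst', by omega, by omega⟩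

lemma step_lemma {V : Type*} [Fintype V] {n : ℕ} (f : ZMod n → V) {k : ℕ}
    (IH : ∀ E A : V → V → Prop, {x : V × V | E x.1 x.2}.ncard ≤ k →
      IsPog E A → IsExcellent A f →
      ∃ D : V → V → Prop, IsCompletion E A D ∧ IsExcellent D f)
    (E A : V → V → Prop) (hpog : IsPog E A) (u v : V) (huv : E u v) (hne : u ≠ v)
    (hcard : {x : V × V | E x.1 x.2}.ncard ≤ k + 1)
    (hgood : IsExcellent (fun x y => A x y ∨ (x = u ∧ y = v)) f) :
    ∃ D : V → V → Prop, IsCompletion E A D ∧ IsExcellent D f := by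
  obtain ⟨hsym, hirr, hor, hdis⟩ := hpog
  set A' : V → V → Prop := fun x y => A x y ∨ (x = u ∧ y = v) with hA'
  set E' : V → V → Prop := fun x y => E x y ∧ ¬(x = u ∧ y = v) ∧ ¬(x = v ∧ y = u) with hE'
  have hpog' : IsPog E' A' := by
    refine ⟨?_, ?_, ?_, ?_⟩
    · rintro x y ⟨h, h1, h2⟩
      exact ⟨hsym x y h, fun hc => h2 ⟨hc.2, hc.1⟩, fun hc => h1 ⟨hc.2, hc.1⟩⟩
    · rintro x ⟨h, _, _⟩; exact hirr x h
    · rintro x y (hxy | ⟨hxu, hyv⟩) hyx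
      · rcases hyx with hyx | ⟨hyu, hxv⟩
        · exact hor x y hxy hyx
        · rw [hyu, hxv] at hxy
          exact (hdis u v huv).2 hxy
      · rcases hyx with hyx | ⟨hyu, hxv⟩
        · rw [hxu, hyv] at hyx
          exact (hdis u v huv).2 hyx
        · exact hne (hxu.symm.trans hxv)
    · rintro x y ⟨hE, h1, h2⟩
      constructor
      · rintro (hA | hn)
        · exact (hdis x y hE).1 hA
        · exact h1 hn
      · rintro (hA | ⟨hyu, hxv⟩)
        · exact (hdis x y hE).2 hA
        · exact h2 ⟨hxv, hyu⟩
  have hsub : {x : V × V | E' x.1 x.2} ⊆ {x : V × V | E x.1 x.2} \ {(u, v)} := by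
    rintro ⟨x, y⟩ ⟨h, h1, h2⟩
    refine ⟨h, ?_⟩
    simp only [Set.mem_singleton_iff, Prod.mk.injEq]
    intro hc
    exact h1 ⟨hc.1, hc.2⟩
  have hmem : (u, v) ∈ {x : V × V | E x.1 x.2} := huv
  have hcard' : {x : V × V | E' x.1 x.2}.ncard ≤ k := by
    have h1 := Set.ncard_le_ncard hsub (Set.toFinite _)
    have h2 := Set.ncard_diff_singleton_lt_of_mem hmem (Set.toFinite _)
    omega
  obtain ⟨D, ⟨hDor, hDA, hDE, hDsub⟩, hDex⟩ := IH E' A' hcard' hpog' hgood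
  refine ⟨D, ⟨hDor, fun x y h => hDA x y (Or.inl h), ?_, ?_⟩, hDex⟩
  · intro x y hE
    by_cases hc1 : x = u ∧ y = v
    · exact Or.inl (hDA x y (Or.inr hc1))
    · by_cases hc2 : x = v ∧ y = u
      · exact Or.inr (hDA y x (Or.inr ⟨hc2.2, hc2.1⟩))
      · exact hDE x y ⟨hE, hc1, hc2⟩
  · intro x y h
    rcases hDsub x y h with hA | hE
    · rcases hA with hA | ⟨rfl, rfl⟩
      · exact Or.inl hA
      · exact Or.inr huv
    · exact Or.inr hE.1

lemma main_aux {V : Type*} [Fintype V] {n : ℕ} [NeZero n] (f : ZMod n → V)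
    (hbij : Function.Bijective f) :
    ∀ (k : ℕ) (E A : V → V → Prop), {x : V × V | E x.1 x.2}.ncard ≤ k →
      IsPog E A → IsExcellent A f →
      ∃ D : V → V → Prop, IsCompletion E A D ∧ IsExcellent D f := by
  intro k
  induction k with
  | zero =>
    intro E A hcard hpog hex
    have hE : ∀ u v : V, ¬ E u v := by
      intro u v huv
      have hm : (u, v) ∈ {x : V × V | E x.1 x.2} := huv
      have h0 : {x : V × V | E x.1 x.2} = ∅ :=
        (Set.ncard_eq_zero (Set.toFinite _)).mp (Nat.le_zero.mp hcard)
      rw [h0] at hm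
      exact hm
    exact ⟨A, ⟨hpog.2.2.1, fun u v h => h, fun u v h => absurd h (hE u v),
      fun u v h => Or.inl h⟩, hex⟩
  | succ k IH =>
    intro E A hcard hpog hex
    by_cases hEe : ∃ u v : V, E u v
    · obtain ⟨u, v, huv⟩ := hEe
      have hne : u ≠ v := fun h => hpog.2.1 v (h ▸ huv)
      rcases choose_orientation hbij hex hne with hgood | hgood
      · exact step_lemma f IH E A hpog u v huv hne hcard hgood
      · exact step_lemma f IH E A hpog v u (hpog.1 u v huv) hne.symm hcard hgood
    · push_neg at hEe
      exact ⟨A, ⟨hpog.2.2.1, fun u v h => h, fun u v h => absurd h (hEe u v),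
        fun u v h => Or.inl h⟩, hex⟩


/-- If a partially oriented graph has an excellent cyclic
ordering, then its unoriented edges can be oriented so that the same cyclic
ordering remains excellent for the resulting oriented graph. -/
theorem stmt_2 {V : Type*} [Fintype V] (E A : V → V → Prop)
    (hpog : IsPog E A) {n : ℕ} (f : ZMod n → V)
    (hbij : Function.Bijective f) (hex : IsExcellent A f) :
    ∃ D : V → V → Prop, IsCompletion E A D ∧ IsExcellent D f := by
  rcases Nat.eq_zero_or_pos n with hn | hn
  · subst hn
    haveI : Finite (ZMod 0) := Finite.of_injective f hbij.injective
    exact (not_finite (ZMod 0)).elim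
  · haveI : NeZero n := ⟨hn.ne'⟩
    exact main_aux f hbij {x : V × V | E x.1 x.2}.ncard E A le_rfl hpog hex
end

section
/- An oriented graph D has an excellent cyclic ordering if and only if D can be extended, by adding new arcs between non-adjacent vertices, to a local tournament that admits a round ordering. Moreover, every excellent ordering of D is a round ordering of such an extension and conversely. -/
/-- `A'` is obtained from `A` by adding new arcs between non-adjacent
vertices only (no arc is reversed and every old arc is kept). -/
def ExtendsByNewArcs {V : Type*} (A A' : V → V → Prop) : Prop :=
  (∀ u v : V, A u v → A' u v) ∧ (∀ u v : V, A' u v → ¬ A v u)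


set_option linter.unusedSectionVars false

namespace Stmt3Aux

variable {n : ℕ} [NeZero n]

lemma val_pos_of_ne {i j : ZMod n} (h : j ≠ i) : 1 ≤ (j - i).val := by
  have h0 : j - i ≠ 0 := sub_ne_zero.mpr h
  have := (ZMod.val_eq_zero (j - i)).not.mpr h0
  omega

lemma eq_of_val_zero {i j : ZMod n} (h : (j - i).val = 0) : j = i :=
  sub_eq_zero.mp ((ZMod.val_eq_zero (j - i)).mp h)

lemma val_rev {i j : ZMod n} (h : j ≠ i) : (i - j).val = n - (j - i).val := by
  have h0 : j - i ≠ 0 := sub_ne_zero.mpr h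
  haveI : NeZero (j - i) := ⟨h0⟩
  simpa [neg_sub] using ZMod.val_neg_of_ne_zero (j - i)

lemma add_split {i j k : ZMod n} (h : (j - i).val + (k - j).val < n) :
    (k - i).val = (j - i).val + (k - j).val := by
  have e : k - i = (j - i) + (k - j) := by ring
  rw [e, ZMod.val_add_of_lt h]

lemma sub_split {i j k : ZMod n} (h : (j - i).val ≤ (k - i).val) :
    (k - j).val = (k - i).val - (j - i).val := by
  have e : k - j = (k - i) - (j - i) := by ring
  rw [e, ZMod.val_sub h]

variable (B : ZMod n → ZMod n → Prop)

/-- excellence at the `ZMod` level -/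
def Exc : Prop :=
  ¬ ∃ i j s t : ZMod n, B i j ∧ B s t ∧
      (t - i).val ≤ (s - i).val ∧ (s - i).val ≤ (j - i).val

open scoped Classical in
noncomputable def mB (i : ZMod n) : ℕ :=
  Finset.univ.sup fun k => if B i k then (k - i).val else 0

noncomputable def rB (i : ZMod n) : ℕ :=
  Finset.univ.sup fun p => mB B p - (i - p).val

variable {B}

lemma mB_le (i : ZMod n) : mB B i ≤ n - 1 := by
  apply Finset.sup_le
  intro k _
  split
  · have := ZMod.val_lt (k - i); omega
  · omega

lemma le_mB {i k : ZMod n} (h : B i k) : (k - i).val ≤ mB B i := by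
  classical
  have := Finset.le_sup (f := fun k => if B i k then (k - i).val else 0)
    (Finset.mem_univ k)
  simp only [h, ↓reduceIte] at this
  exact this

lemma mB_spec {i : ZMod n} (h : 1 ≤ mB B i) : ∃ k, B i k ∧ (k - i).val = mB B i := by
  classical
  obtain ⟨k, -, hk⟩ := Finset.exists_mem_eq_sup Finset.univ Finset.univ_nonempty
    (fun k => if B i k then (k - i).val else 0)
  rw [mB] at h
  by_cases hB : B i k
  · exact ⟨k, hB, by rw [mB]; simpa [hB] using hk.symm⟩
  · rw [hk] at h; simp [hB] at h

lemma rB_le (i : ZMod n) : rB B i ≤ n - 1 := by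
  apply Finset.sup_le
  intro p _
  have := mB_le (B := B) p
  omega

lemma mB_le_rB (i : ZMod n) : mB B i ≤ rB B i := by
  have := Finset.le_sup (f := fun p => mB B p - (i - p).val) (Finset.mem_univ i)
  simp only [sub_self, ZMod.val_zero, Nat.sub_zero] at this
  exact this

lemma rB_ge {p q i : ZMod n} {d : ℕ} (hpq : B p q)
    (h : (i - p).val + d ≤ (q - p).val) : d ≤ rB B i := by
  have h1 := le_mB hpq
  have h2 := Finset.le_sup (f := fun p => mB B p - (i - p).val) (Finset.mem_univ p)
  simp only [rB] at *
  omega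

lemma rB_spec {i : ZMod n} {d : ℕ} (hd1 : 1 ≤ d) (hd : d ≤ rB B i) :
    ∃ p q, B p q ∧ (i - p).val + d ≤ (q - p).val := by
  obtain ⟨p, -, hp⟩ := Finset.exists_mem_eq_sup Finset.univ Finset.univ_nonempty
    (fun p => mB B p - (i - p).val)
  rw [rB] at hd
  rw [hp] at hd
  have hm : 1 ≤ mB B p := by omega
  obtain ⟨q, hq, hqv⟩ := mB_spec hm
  exact ⟨p, q, hq, by omega⟩

/-- the round completion relation -/
def RR (B : ZMod n → ZMod n → Prop) (i j : ZMod n) : Prop :=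
  1 ≤ (j - i).val ∧ (j - i).val ≤ rB B i

lemma cast_val (x : ZMod n) : ((x.val : ZMod n)) = x := by
  simp [ZMod.natCast_val, ZMod.cast_id]

lemma eq_of_val_eq {a b : ZMod n} (h : a.val = b.val) : a = b :=
  ZMod.val_injective n h

lemma sub_cancel {i a b : ZMod n} (h : i - a = i - b) : a = b := by
  have := congrArg (fun z => i - z) h
  simpa [sub_sub_cancel] using this

lemma R_out_closure {v x y : ZMod n} (hx : RR B v x) (hy : RR B v y)
    (hlt : (x - v).val < (y - v).val) : RR B x y := by
  obtain ⟨p, q, hpq, hle⟩ := rB_spec hy.1 hy.2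
  have hMlt := ZMod.val_lt (q - p)
  have hxp : (x - p).val = (v - p).val + (x - v).val := add_split (by omega)
  have hyx : (y - x).val = (y - v).val - (x - v).val := sub_split (le_of_lt hlt)
  exact ⟨by omega, rB_ge hpq (d := (y - x).val) (by omega)⟩

lemma R_in_closure {v x y : ZMod n} (hx : RR B x v) (hy : RR B y v)
    (hlt : (v - y).val < (v - x).val) : RR B x y := by
  have hyx : (y - x).val = (v - x).val - (v - y).val := by
    have h := ZMod.val_sub (a := v - x) (b := v - y) (le_of_lt hlt)
    have e : (v - x) - (v - y) = y - x := by ring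
    rw [e] at h; exact h
  exact ⟨by omega, by have := hx.2; omega⟩

lemma R_into_downward {i j : ZMod n} (hj : RR B j i) {e' : ℕ} (h1 : 1 ≤ e')
    (h2 : e' ≤ (i - j).val) : RR B (i - (e' : ZMod n)) i := by
  obtain ⟨p, q, hpq, hle⟩ := rB_spec hj.1 hj.2
  have hMlt := ZMod.val_lt (q - p)
  have hijlt := ZMod.val_lt (i - j)
  have hip : (i - p).val = (j - p).val + (i - j).val := add_split (by omega)
  have he'n : ((e' : ZMod n)).val = e' := ZMod.val_cast_of_lt (by omega)
  have hji : (i - (i - (e' : ZMod n))).val = e' := by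
    have e : i - (i - (e' : ZMod n)) = (e' : ZMod n) := by ring
    rw [e, he'n]
  have hj'p : ((i - (e' : ZMod n)) - p).val = (i - p).val - e' := by
    have h := ZMod.val_sub (a := i - p) (b := (e' : ZMod n)) (by rw [he'n]; omega)
    have e : (i - p) - (e' : ZMod n) = (i - (e' : ZMod n)) - p := by ring
    rw [e] at h
    rw [h, he'n]
  refine ⟨by rw [hji]; omega, ?_⟩
  rw [hji]
  exact rB_ge hpq (by rw [hj'p]; omega)

lemma downward_eq_Icc {S : Finset ℕ} (h0 : 0 ∉ S)
    (hdc : ∀ e ∈ S, ∀ e', 1 ≤ e' → e' ≤ e → e' ∈ S) :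
    ∀ e, e ∈ S ↔ 1 ≤ e ∧ e ≤ S.card := by
  intro e
  constructor
  · intro he
    have h1 : 1 ≤ e := by
      rcases Nat.eq_zero_or_pos e with h | h
      exacts [absurd (h ▸ he) h0, h]
    refine ⟨h1, ?_⟩
    have hsub : Finset.Icc 1 e ⊆ S := fun e' he' => by
      simp only [Finset.mem_Icc] at he'
      exact hdc e he e' he'.1 he'.2
    have := Finset.card_le_card hsub
    simpa [Nat.card_Icc] using this
  · rintro ⟨h1, h2⟩
    by_contra he
    have hsub : S ⊆ Finset.Icc 1 (e - 1) := fun e'' he'' => by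
      simp only [Finset.mem_Icc]
      refine ⟨?_, ?_⟩
      · rcases Nat.eq_zero_or_pos e'' with h | h
        exacts [absurd (h ▸ he'') h0, h]
      · by_contra hlt
        push_neg at hlt
        exact he (hdc e'' he'' e h1 (by omega))
    have := Finset.card_le_card hsub
    simp only [Nat.card_Icc] at this
    omega

lemma mem_interval {i j : ZMod n} {r : ℕ} (hr : r ≤ n - 1) :
    (j ∈ (Finset.Icc 1 r).image fun a : ℕ => i + (a : ZMod n)) ↔
      1 ≤ (j - i).val ∧ (j - i).val ≤ r := by
  have hn1 : 1 ≤ n := Nat.one_le_iff_ne_zero.mpr (NeZero.ne n)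
  simp only [Finset.mem_image, Finset.mem_Icc]
  constructor
  · rintro ⟨a, ⟨h1, h2⟩, rfl⟩
    have e : (i + (a : ZMod n)) - i = (a : ZMod n) := by ring
    rw [e, ZMod.val_cast_of_lt (by omega)]
    exact ⟨h1, h2⟩
  · rintro ⟨h1, h2⟩
    refine ⟨(j - i).val, ⟨h1, h2⟩, ?_⟩
    rw [cast_val]
    ring

lemma card_interval (i : ZMod n) {r : ℕ} (hr : r ≤ n - 1) :
    ((Finset.Icc 1 r).image fun a : ℕ => i + (a : ZMod n)).card = r := by
  have hn1 : 1 ≤ n := Nat.one_le_iff_ne_zero.mpr (NeZero.ne n)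
  rw [Finset.card_image_of_injOn, Nat.card_Icc]
  · omega
  · intro a ha b hb hab
    simp only [Finset.coe_Icc, Set.mem_Icc] at ha hb
    have ha' : ((a : ZMod n)).val = a := ZMod.val_cast_of_lt (by omega)
    have hb' : ((b : ZMod n)).val = b := ZMod.val_cast_of_lt (by omega)
    have : (a : ZMod n) = (b : ZMod n) := by
      have := add_left_cancel hab
      exact this
    rw [← ha', ← hb', this]

open scoped Classical in
noncomputable def InF (B : ZMod n → ZMod n → Prop) (i : ZMod n) : Finset (ZMod n) :=
  Finset.univ.filter fun j => RR B j i

lemma mem_InF {B : ZMod n → ZMod n → Prop} {i j : ZMod n} :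
    j ∈ InF B i ↔ RR B j i := by
  rw [InF]; simp

lemma R_in_iff (i j : ZMod n) :
    RR B j i ↔ 1 ≤ (i - j).val ∧ (i - j).val ≤ (InF B i).card := by
  classical
  set S := (InF B i).image fun j => (i - j).val with hS
  have hmem : ∀ j, j ∈ InF B i ↔ RR B j i := by
    intro j; rw [InF]; simp
  have hinj : Set.InjOn (fun j => (i - j).val) (InF B i) := fun a _ b _ h => by
    exact sub_cancel (eq_of_val_eq h)
  have hcard : S.card = (InF B i).card := Finset.card_image_of_injOn hinj
  have h0 : 0 ∉ S := by
    simp only [hS, Finset.mem_image]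
    rintro ⟨k, hk, hk0⟩
    have hki : i = k := eq_of_val_zero hk0
    rw [hmem] at hk
    rw [← hki] at hk
    have h1 := hk.1
    rw [sub_self, ZMod.val_zero] at h1
    omega
  have hdc : ∀ e ∈ S, ∀ e', 1 ≤ e' → e' ≤ e → e' ∈ S := by
    rintro e he e' h1 h2
    simp only [hS, Finset.mem_image] at he ⊢
    obtain ⟨k, hk, rfl⟩ := he
    rw [hmem] at hk
    refine ⟨i - (e' : ZMod n), ?_, ?_⟩
    · rw [hmem]
      exact R_into_downward hk h1 h2
    · have e : i - (i - (e' : ZMod n)) = (e' : ZMod n) := by ring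
      rw [e, ZMod.val_cast_of_lt (by have := ZMod.val_lt (i - k); omega)]
  have hchar := downward_eq_Icc h0 hdc
  constructor
  · intro h
    have hj : j ∈ InF B i := (hmem j).mpr h
    have hjS : (i - j).val ∈ S := Finset.mem_image_of_mem _ hj
    rw [hchar] at hjS
    omega
  · rintro ⟨h1, h2⟩
    have hjS : (i - j).val ∈ S := (hchar _).mpr ⟨h1, by omega⟩
    simp only [hS, Finset.mem_image] at hjS
    obtain ⟨j', hj', hval⟩ := hjS
    have : j' = j := sub_cancel (eq_of_val_eq hval)
    subst this
    exact (hmem j').mp hj'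

variable (hex : Exc B)
include hex

lemma exc_irrefl (i : ZMod n) : ¬ B i i := fun h =>
  hex ⟨i, i, i, i, h, h, le_refl _, le_refl _⟩

lemma B_subset_R {i j : ZMod n} (h : B i j) : RR B i j := by
  have hne : j ≠ i := by
    rintro rfl; exact exc_irrefl hex _ h
  exact ⟨val_pos_of_ne hne, le_trans (le_mB h) (mB_le_rB i)⟩

lemma R_no_rev {i j : ZMod n} (hR : RR B i j) : ¬ B j i := by
  intro hB
  obtain ⟨p, q, hpq, hle⟩ := rB_spec hR.1 hR.2
  have hqp := ZMod.val_lt (q - p)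
  have hjp : (j - p).val = (i - p).val + (j - i).val := add_split (by omega)
  exact hex ⟨p, q, j, i, hpq, hB, by omega, by omega⟩

lemma R_asymm {i j : ZMod n} (hij : RR B i j) (hji : RR B j i) : False := by
  set d := (j - i).val with hd
  have hd1 : 1 ≤ d := hij.1
  have hne : j ≠ i := fun h => by
    rw [hd, h, sub_self, ZMod.val_zero] at hd1; omega
  have hd' : (i - j).val = n - d := val_rev hne
  obtain ⟨p, q, hpq, hle⟩ := rB_spec hij.1 hij.2
  obtain ⟨p', q', hpq', hle'⟩ := rB_spec hji.1 hji.2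
  rw [hd'] at hle'
  have hdn : d < n := by have := ZMod.val_lt (j - i); omega
  have hMlt := ZMod.val_lt (q - p)
  have hM'lt := ZMod.val_lt (q' - p')
  -- b := (j - p').val < d
  have hbd : (j - p').val < d := by omega
  have hip' : (i - p').val = (j - p').val + (n - d) := by
    have := add_split (i := p') (j := j) (k := i) (by omega)
    omega
  have hp'i : (p' - i).val = d - (j - p').val := by
    have hne2 : i ≠ p' := by
      intro h
      rw [← h, sub_self, ZMod.val_zero] at hip'
      omega
    have := val_rev (i := p') (j := i) hne2
    omega
  have hq'i : (q' - i).val = (q' - p').val - ((j - p').val + (n - d)) := by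
    have := sub_split (i := p') (j := i) (k := q') (by omega)
    omega
  have h2 : (p' - p).val = (i - p).val + (d - (j - p').val) := by
    have := add_split (i := p) (j := i) (k := p') (by omega)
    omega
  have h1 : (q' - p).val = (i - p).val + (q' - i).val := by
    have := add_split (i := p) (j := i) (k := q') (by omega)
    omega
  exact hex ⟨p, q, p', q', hpq, hpq', by omega, by omega⟩

end Stmt3Aux

namespace Stmt3Aux

lemma deg_bound {V : Type*} [Fintype V] (A' : V → V → Prop) (hAs : IsOrientedGraph A')
    {n : ℕ} [NeZero n] (f : ZMod n → V) (hbij : Function.Bijective f) (v : V) :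
    {u | A' v u}.ncard + {u | A' u v}.ncard ≤ n - 1 := by
  classical
  have hcard : Nat.card V = n := by
    rw [Nat.card_eq_fintype_card, ← ZMod.card n]
    exact (Fintype.card_of_bijective hbij).symm
  have hdisj : Disjoint {u | A' v u} {u | A' u v} := by
    rw [Set.disjoint_left]
    intro u h1 h2
    exact hAs _ _ h1 h2
  have hsub : {u | A' v u} ∪ {u | A' u v} ⊆ ({v}ᶜ : Set V) := by
    intro u hu
    simp only [Set.mem_compl_iff, Set.mem_singleton_iff]
    rintro rfl
    rcases hu with h | h <;> exact hAs _ _ h h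
  have hunion := Set.ncard_union_eq hdisj (Set.toFinite _) (Set.toFinite _)
  have hle := Set.ncard_le_ncard hsub (Set.toFinite _)
  have hcompl : ({v}ᶜ : Set V).ncard = n - 1 := by
    have h1 := Set.ncard_add_ncard_compl ({v} : Set V)
    rw [Set.ncard_singleton, hcard] at h1
    omega
  rw [hunion, hcompl] at hle
  exact hle

lemma n_ne_zero {V : Type*} [Fintype V] {n : ℕ} {f : ZMod n → V}
    (hf : Function.Injective f) : n ≠ 0 := by
  rintro rfl
  haveI : Infinite (ZMod 0) := inferInstanceAs (Infinite ℤ)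
  haveI : Infinite V := Infinite.of_injective f hf
  exact not_finite V

lemma round_excellent {V : Type*} [Fintype V] (A A' : V → V → Prop)
    (hext : ExtendsByNewArcs A A')
    (hlt : IsLocalTournament A') {n : ℕ} (f : ZMod n → V)
    (hround : IsRoundOrdering A' f) : IsExcellent A f := by
  rintro ⟨i, j, s, t, h1, h2, hts, hsj⟩
  obtain ⟨hbij, hout, hin⟩ := hround
  haveI : NeZero n := ⟨n_ne_zero hbij.1⟩
  have hAsym := hlt.1
  have a1 : A' (f i) (f j) := hext.1 _ _ h1
  have a2 : A' (f s) (f t) := hext.1 _ _ h2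
  have hij := (hout i j).mp a1
  by_cases hsi : s = i
  · subst hsi
    have h00 : ((s : ZMod n) - s).val = 0 := by rw [sub_self, ZMod.val_zero]
    have ht0 : (t - s).val = 0 := by omega
    have hts' : t = s := eq_of_val_zero ht0
    subst hts'
    exact hAsym _ _ a2 a2
  · have hsi' : 1 ≤ (s - i).val := val_pos_of_ne hsi
    have a3 : A' (f i) (f s) := (hout i s).mpr ⟨hsi', by omega⟩
    by_cases hti : t = i
    · subst hti
      exact (hext.2 _ _ a3) h2
    · have hti' : 1 ≤ (t - i).val := val_pos_of_ne hti
      have hst : s ≠ t := by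
        rintro rfl
        exact hAsym _ _ a2 a2
      have hins := (hin s i).mp a3
      have houts := (hout s t).mp a2
      have h5 : (s - t).val = (s - i).val - (t - i).val := sub_split hts
      have h6 : (t - s).val = n - (s - t).val := val_rev hst
      have hdeg := deg_bound A' hAsym f hbij (f s)
      have hv1 := ZMod.val_lt (s - i)
      have hv2 := ZMod.val_lt (t - i)
      omega

lemma excellent_round {V : Type*} [Fintype V] (A : V → V → Prop)
    {n : ℕ} (f : ZMod n → V) (hf : Function.Bijective f) (hexc : IsExcellent A f) :
    ∃ A' : V → V → Prop, ExtendsByNewArcs A A' ∧ IsLocalTournament A' ∧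
      IsRoundOrdering A' f := by
  classical
  haveI : NeZero n := ⟨n_ne_zero hf.1⟩
  set e := Equiv.ofBijective f hf with he
  have hef : ∀ i, e i = f i := fun i => rfl
  have hsy : ∀ i, e.symm (f i) = i := fun i => by rw [← hef]; exact e.symm_apply_apply i
  have hfs : ∀ u, f (e.symm u) = u := fun u => by rw [← hef]; exact e.apply_symm_apply u
  set B : ZMod n → ZMod n → Prop := fun i j => A (f i) (f j) with hB
  have hexB : Exc B := by
    rintro ⟨i, j, s, t, hh1, hh2, hh3, hh4⟩
    exact hexc ⟨i, j, s, t, hh1, hh2, hh3, hh4⟩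
  have houtcard : ∀ i : ZMod n, {u | RR B i (e.symm u)}.ncard = rB B i := by
    intro i
    have hset : {u | RR B i (e.symm u)} = f '' {j | RR B i j} := by
      ext u
      simp only [Set.mem_setOf_eq, Set.mem_image]
      constructor
      · intro h
        exact ⟨e.symm u, h, hfs u⟩
      · rintro ⟨j0, hj0, rfl⟩
        rwa [hsy]
    rw [hset, Set.ncard_image_of_injective _ hf.1]
    have hset2 : {j | RR B i j} =
        ↑((Finset.Icc 1 (rB B i)).image fun a : ℕ => i + (a : ZMod n)) := by
      ext j
      rw [Set.mem_setOf_eq, Finset.mem_coe, mem_interval (rB_le i)]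
      exact Iff.rfl
    rw [hset2, Set.ncard_coe_finset, card_interval i (rB_le i)]
  have hincard : ∀ i : ZMod n, {u | RR B (e.symm u) i}.ncard = (InF B i).card := by
    intro i
    have hset : {u | RR B (e.symm u) i} = f '' {j | RR B j i} := by
      ext u
      simp only [Set.mem_setOf_eq, Set.mem_image]
      constructor
      · intro h
        exact ⟨e.symm u, h, hfs u⟩
      · rintro ⟨j0, hj0, rfl⟩
        rwa [hsy]
    rw [hset, Set.ncard_image_of_injective _ hf.1]
    have hset2 : {j | RR B j i} = ↑(InF B i) := by
      ext j
      simp only [Set.mem_setOf_eq, Finset.mem_coe, mem_InF]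
    rw [hset2, Set.ncard_coe_finset]
  refine ⟨fun u v => RR B (e.symm u) (e.symm v), ⟨?_, ?_⟩, ⟨?_, ?_, ?_⟩, hf, ?_, ?_⟩
  · -- A ⊆ A'
    intro u v h
    exact B_subset_R hexB (show A (f (e.symm u)) (f (e.symm v)) by rw [hfs, hfs]; exact h)
  · -- no reversal
    intro u v h hvu
    exact R_no_rev hexB h (show A (f (e.symm v)) (f (e.symm u)) by rw [hfs, hfs]; exact hvu)
  · -- asymmetric
    intro u v h1 h2
    exact (R_asymm hexB h1 h2).elim
  · -- out-neighbourhoods are tournaments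
    intro v x y hvx hvy hxy
    rcases lt_trichotomy ((e.symm x - e.symm v).val) ((e.symm y - e.symm v).val) with h | h | h
    · exact Or.inl (R_out_closure hvx hvy h)
    · exfalso
      apply hxy
      have h2 : e.symm x - e.symm v = e.symm y - e.symm v := eq_of_val_eq h
      have h3 : e.symm x = e.symm y := by
        have := congrArg (fun z => z + e.symm v) h2
        simpa [sub_add_cancel] using this
      rw [← hfs x, ← hfs y, h3]
    · exact Or.inr (R_out_closure hvy hvx h)
  · -- in-neighbourhoods are tournaments
    intro v x y hxv hyv hxy
    rcases lt_trichotomy ((e.symm v - e.symm y).val) ((e.symm v - e.symm x).val) with h | h | h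
    · exact Or.inl (R_in_closure hxv hyv h)
    · exfalso
      apply hxy
      have h3 : e.symm x = e.symm y := sub_cancel (eq_of_val_eq h.symm)
      rw [← hfs x, ← hfs y, h3]
    · exact Or.inr (R_in_closure hyv hxv h)
  · -- out condition of round ordering
    intro i j
    simp only [hsy]
    rw [houtcard i]
    exact Iff.rfl
  · -- in condition of round ordering
    intro i j
    simp only [hsy]
    rw [hincard i]
    exact R_in_iff i j

end Stmt3Aux

/-- An oriented graph `A` has an excellent cyclic ordering iff
it can be extended, by adding arcs between non-adjacent vertices, to a local
tournament admitting a round ordering; moreover every excellent ordering of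
`A` is a round ordering of such an extension, and every round ordering of such
an extension is an excellent ordering of `A`. -/
theorem stmt_3 {V : Type*} [Fintype V] (A : V → V → Prop)
    (hA : IsOrientedGraph A) :
    ((∃ (n : ℕ) (f : ZMod n → V), Function.Bijective f ∧ IsExcellent A f) ↔
      (∃ A' : V → V → Prop, ExtendsByNewArcs A A' ∧ IsLocalTournament A' ∧
        ∃ (n : ℕ) (f : ZMod n → V), IsRoundOrdering A' f)) ∧
    (∀ (n : ℕ) (f : ZMod n → V), Function.Bijective f → IsExcellent A f →
      ∃ A' : V → V → Prop, ExtendsByNewArcs A A' ∧ IsLocalTournament A' ∧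
        IsRoundOrdering A' f) ∧
    (∀ (A' : V → V → Prop) (n : ℕ) (f : ZMod n → V),
      ExtendsByNewArcs A A' → IsLocalTournament A' → IsRoundOrdering A' f →
        IsExcellent A f) := by
  refine ⟨⟨?_, ?_⟩, ?_, ?_⟩
  · rintro ⟨n, f, hbij, hexc⟩
    obtain ⟨A', h1, h2, h3⟩ := Stmt3Aux.excellent_round A f hbij hexc
    exact ⟨A', h1, h2, n, f, h3⟩
  · rintro ⟨A', hext, hlt, n, f, hround⟩
    exact ⟨n, f, hround.1, Stmt3Aux.round_excellent A A' hext hlt f hround⟩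
  · intro n f hbij hexc
    exact Stmt3Aux.excellent_round A f hbij hexc
  · intro A' n f hext hlt hround
    exact Stmt3Aux.round_excellent A A' hext hlt f hround
end

section
/- Every round oriented graph can be completed to a locally transitive tournament, i.e., arcs can be added between every pair of non-adjacent vertices so that the resulting digraph is a tournament in which every out-neighbourhood and every in-neighbourhood induces a transitive tournament. -/
section RoundAux

variable {n : ℕ} [NeZero n]

private lemma valAddVal (i j : ZMod n) (h : i ≠ j) : (j - i).val + (i - j).val = n := by
  have h1 : j - i ≠ 0 := sub_ne_zero.mpr (Ne.symm h)
  have h2 : i - j = -(j - i) := by ring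
  have h3 := ZMod.val_lt (j - i)
  rw [h2, ZMod.neg_val, if_neg h1]
  omega

private lemma valPos (i j : ZMod n) (h : i ≠ j) : 1 ≤ (j - i).val := by
  have h1 : j - i ≠ 0 := sub_ne_zero.mpr (Ne.symm h)
  have := (ZMod.val_eq_zero (j - i)).not.mpr h1
  omega

private lemma valCast (a : ZMod n) : ((a.val : ℕ) : ZMod n) = a :=
  ZMod.natCast_rightInverse a

private lemma valSubSub (v x y : ZMod n) (h : (x - v).val ≤ (y - v).val) :
    (y - x).val = (y - v).val - (x - v).val := by
  have key : y - x = (((y - v).val - (x - v).val : ℕ) : ZMod n) := by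
    rw [Nat.cast_sub h, valCast, valCast]
    ring
  rw [key, ZMod.val_cast_of_lt (lt_of_le_of_lt (Nat.sub_le _ _) (ZMod.val_lt _))]

private lemma tie1 (i j : ZMod n) (h : 2 * (j - i).val = n) (h2 : 2 * i.val < n) :
    n ≤ 2 * j.val := by
  set k := j - i with hk
  have hj : i + k = j := by rw [hk]; ring
  have hv : j.val = (i.val + k.val) % n := by rw [← hj, ZMod.val_add]
  have hkn := ZMod.val_lt k
  have h3 : i.val + k.val < n := by omega
  rw [Nat.mod_eq_of_lt h3] at hv
  omega

private lemma tie2 (i j : ZMod n) (h : 2 * (j - i).val = n) (h2 : n ≤ 2 * i.val) :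
    2 * j.val < n := by
  set k := j - i with hk
  have hj : i + k = j := by rw [hk]; ring
  have hv : j.val = (i.val + k.val) % n := by rw [← hj, ZMod.val_add]
  have hkn := ZMod.val_lt k
  have hin := ZMod.val_lt i
  have h3 : n ≤ i.val + k.val := by omega
  rw [Nat.mod_eq_sub_mod h3, Nat.mod_eq_of_lt (by omega)] at hv
  omega

/-- The completion of a round relation on `ZMod n`: keep all arcs, and orient a
free pair towards the cyclically nearer endpoint (tie broken by position). -/
private def Tc (A : ZMod n → ZMod n → Prop) (i j : ZMod n) : Prop :=
  A i j ∨ (¬ A i j ∧ ¬ A j i ∧ i ≠ j ∧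
    (2 * (j - i).val < n ∨ (2 * (j - i).val = n ∧ 2 * i.val < n)))

section TcLemmas

variable {A : ZMod n → ZMod n → Prop}
  (hasym : ∀ i j, A i j → ¬ A j i)
  (hK1 : ∀ i j k : ZMod n, A i j → 1 ≤ (k - i).val → (k - i).val ≤ (j - i).val → A i k)
  (hK2 : ∀ i j k : ZMod n, A j i → 1 ≤ (i - k).val → (i - k).val ≤ (i - j).val → A k i)

include hasym in
private lemma Tc_ne {i j : ZMod n} (h : Tc A i j) : i ≠ j := by
  rcases h with h | ⟨_, _, h, _⟩
  · intro hh
    subst hh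
    exact hasym _ _ h h
  · exact h

include hasym in
private lemma Tc_not_rev {i j : ZMod n} (h : Tc A i j) : ¬ A j i := by
  rcases h with h | ⟨_, h, _, _⟩
  · exact hasym i j h
  · exact h

include hasym in
private lemma Tc_asymm {i j : ZMod n} (hij : Tc A i j) (hji : Tc A j i) : False := by
  rcases hij with h1 | ⟨h1a, h1b, h1n, h1c⟩
  · rcases hji with h2 | ⟨_, h2b, _, _⟩
    · exact hasym i j h1 h2
    · exact h2b h1
  · rcases hji with h2 | ⟨_, _, _, h2c⟩
    · exact h1b h2
    · have hs := valAddVal i j h1n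
      rcases h1c with h | ⟨h, hi⟩ <;> rcases h2c with h' | ⟨h', hj⟩
      · omega
      · omega
      · omega
      · have := tie1 i j h hi
        omega

include hasym in
private lemma Tc_total {i j : ZMod n} (hne : i ≠ j) : Tc A i j ∨ Tc A j i := by
  by_cases hij : A i j
  · exact Or.inl (Or.inl hij)
  by_cases hji : A j i
  · exact Or.inr (Or.inl hji)
  have hs := valAddVal i j hne
  rcases lt_trichotomy (2 * (j - i).val) n with h | h | h
  · exact Or.inl (Or.inr ⟨hij, hji, hne, Or.inl h⟩)
  · by_cases hi : 2 * i.val < n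
    · exact Or.inl (Or.inr ⟨hij, hji, hne, Or.inr ⟨h, hi⟩⟩)
    · refine Or.inr (Or.inr ⟨hji, hij, hne.symm, Or.inr ⟨by omega, ?_⟩⟩)
      exact tie2 i j h (le_of_not_gt hi)
  · exact Or.inr (Or.inr ⟨hji, hij, hne.symm, Or.inl (by omega)⟩)

include hasym hK1 hK2 in
private lemma Tc_out {v x y : ZMod n} (hvx : Tc A v x) (hvy : Tc A v y)
    (hab : (x - v).val < (y - v).val) : Tc A x y := by
  by_contra hxy
  have hvx' : v ≠ x := Tc_ne hasym hvx
  have hvy' : v ≠ y := Tc_ne hasym hvy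
  have hxyne : x ≠ y := by
    intro h; rw [h] at hab; omega
  have hm : (y - x).val = (y - v).val - (x - v).val := valSubSub v x y hab.le
  have ha1 : 1 ≤ (x - v).val := valPos v x hvx'
  have hbn : (y - v).val < n := ZMod.val_lt _
  by_cases hAxy : A x y
  · exact hxy (Or.inl hAxy)
  by_cases hAyx : A y x
  · have h1 := valAddVal y x hxyne.symm
    have h2 := valAddVal y v hvy'.symm
    have : A y v := hK1 y x v hAyx (by omega) (by omega)
    exact Tc_not_rev hasym hvy this
  · have hfree : ¬ (2 * (y - x).val < n ∨ (2 * (y - x).val = n ∧ 2 * x.val < n)) := by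
      intro hc; exact hxy (Or.inr ⟨hAxy, hAyx, hxyne, hc⟩)
    push_neg at hfree
    have h2m : n ≤ 2 * (y - x).val := hfree.1
    have h2b : n < 2 * (y - v).val := by omega
    have hAvy : A v y := by
      rcases hvy with h | ⟨_, _, _, h⟩
      · exact h
      · rcases h with h | ⟨h, _⟩ <;> omega
    exact hAxy (hK2 y v x hAvy (by omega) (by omega))

include hasym hK1 hK2 in
private lemma Tc_in {v x y : ZMod n} (hxv : Tc A x v) (hyv : Tc A y v)
    (hab : (v - y).val < (v - x).val) : Tc A x y := by
  by_contra hxy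
  have hvx' : x ≠ v := Tc_ne hasym hxv
  have hvy' : y ≠ v := Tc_ne hasym hyv
  have hxyne : x ≠ y := by
    intro h; rw [h] at hab; omega
  have hm : (y - x).val = (v - x).val - (v - y).val := by
    have h := valSubSub (0 : ZMod n) (v - y) (v - x)
      (by simp only [sub_zero]; exact hab.le)
    simp only [sub_zero] at h
    have heq : v - x - (v - y) = y - x := by ring
    rwa [heq] at h
  have hb1 : 1 ≤ (v - y).val := valPos y v hvy'
  have han : (v - x).val < n := ZMod.val_lt _
  by_cases hAxy : A x y
  · exact hxy (Or.inl hAxy)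
  by_cases hAyx : A y x
  · have h1 := valAddVal y x hxyne.symm
    have h2 := valAddVal v x hvx'.symm
    have : A v x := hK2 x y v hAyx (by omega) (by omega)
    exact Tc_not_rev hasym hxv this
  · have hfree : ¬ (2 * (y - x).val < n ∨ (2 * (y - x).val = n ∧ 2 * x.val < n)) := by
      intro hc; exact hxy (Or.inr ⟨hAxy, hAyx, hxyne, hc⟩)
    push_neg at hfree
    have h2m : n ≤ 2 * (y - x).val := hfree.1
    have h2a : n < 2 * (v - x).val := by omega
    have hAxv : A x v := by
      rcases hxv with h | ⟨_, _, _, h⟩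
      · exact h
      · rcases h with h | ⟨h, _⟩ <;> omega
    exact hAxy (hK1 x v y hAxv (by omega) (by omega))

end TcLemmas

end RoundAux

/-- Every round oriented graph can be completed (by adding
arcs between non-adjacent pairs) to a locally transitive tournament. -/
theorem stmt_4 {V : Type*} [Fintype V] (A : V → V → Prop)
    (hA : IsOrientedGraph A)
    (hround : ∃ (n : ℕ) (f : ZMod n → V), IsRoundOrdering A f) :
    ∃ T : V → V → Prop, CompletesToTournament A T ∧ IsLocallyTransitive T := by
  classical
  obtain ⟨n, f, hb, h1, h2⟩ := hround
  haveI : NeZero n := by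
    constructor
    intro hn
    subst hn
    haveI : Infinite (ZMod 0) := Int.infinite
    haveI : Finite (ZMod 0) := Finite.of_injective f hb.injective
    exact not_finite (ZMod 0)
  set A' : ZMod n → ZMod n → Prop := fun i j => A (f i) (f j) with hA'def
  have hasym : ∀ i j, A' i j → ¬ A' j i := fun i j h h' => hA _ _ h h'
  have hK1 : ∀ i j k : ZMod n, A' i j → 1 ≤ (k - i).val → (k - i).val ≤ (j - i).val →
      A' i k := by
    intro i j k hij h1k h2k
    exact (h1 i k).mpr ⟨h1k, le_trans h2k ((h1 i j).mp hij).2⟩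
  have hK2 : ∀ i j k : ZMod n, A' j i → 1 ≤ (i - k).val → (i - k).val ≤ (i - j).val →
      A' k i := by
    intro i j k hji h1k h2k
    exact (h2 i k).mpr ⟨h1k, le_trans h2k ((h2 i j).mp hji).2⟩
  set e : ZMod n ≃ V := Equiv.ofBijective f hb with hedef
  have hfe : ∀ u : V, f (e.symm u) = u := fun u => e.apply_symm_apply u
  refine ⟨fun u v => Tc A' (e.symm u) (e.symm v), ⟨?_, ?_, ?_, ?_⟩, ?_, ?_⟩
  · -- A u v → T u v
    intro u v h
    exact Or.inl (show A (f (e.symm u)) (f (e.symm v)) by rw [hfe, hfe]; exact h)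
  · -- T u v → ¬ A v u
    intro u v h hvu
    exact Tc_not_rev hasym h (show A (f (e.symm v)) (f (e.symm u)) by rw [hfe, hfe]; exact hvu)
  · -- asymmetry of T
    intro u v h h'
    exact absurd h' (fun h' => Tc_asymm hasym h h')
  · -- totality of T
    intro u v huv
    exact Tc_total hasym (fun h => huv (e.symm.injective h))
  · -- out-transitivity
    intro v x y z hvx hvy hvz hxy hyz
    have lt1 : (e.symm x - e.symm v).val < (e.symm y - e.symm v).val := by
      rcases lt_trichotomy ((e.symm x - e.symm v).val) ((e.symm y - e.symm v).val)
        with h | h | h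
      · exact h
      · exfalso
        apply Tc_ne hasym hxy
        have : ((e.symm x - e.symm v).val : ZMod n) = ((e.symm y - e.symm v).val : ZMod n) := by
          rw [h]
        rw [valCast, valCast] at this
        exact sub_left_inj.mp this
      · exact absurd (Tc_out hasym hK1 hK2 hvy hvx h) (fun hh => Tc_asymm hasym hxy hh)
    have lt2 : (e.symm y - e.symm v).val < (e.symm z - e.symm v).val := by
      rcases lt_trichotomy ((e.symm y - e.symm v).val) ((e.symm z - e.symm v).val)
        with h | h | h
      · exact h
      · exfalso
        apply Tc_ne hasym hyz
        have : ((e.symm y - e.symm v).val : ZMod n) = ((e.symm z - e.symm v).val : ZMod n) := by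
          rw [h]
        rw [valCast, valCast] at this
        exact sub_left_inj.mp this
      · exact absurd (Tc_out hasym hK1 hK2 hvz hvy h) (fun hh => Tc_asymm hasym hyz hh)
    exact Tc_out hasym hK1 hK2 hvx hvz (lt_trans lt1 lt2)
  · -- in-transitivity
    intro v x y z hxv hyv hzv hxy hyz
    have lt1 : (e.symm v - e.symm y).val < (e.symm v - e.symm x).val := by
      rcases lt_trichotomy ((e.symm v - e.symm y).val) ((e.symm v - e.symm x).val)
        with h | h | h
      · exact h
      · exfalso
        apply Tc_ne hasym hxy
        have : ((e.symm v - e.symm y).val : ZMod n) = ((e.symm v - e.symm x).val : ZMod n) := by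
          rw [h]
        rw [valCast, valCast] at this
        exact (sub_right_inj.mp this).symm
      · exact absurd (Tc_in hasym hK1 hK2 hyv hxv h) (fun hh => Tc_asymm hasym hxy hh)
    have lt2 : (e.symm v - e.symm z).val < (e.symm v - e.symm y).val := by
      rcases lt_trichotomy ((e.symm v - e.symm z).val) ((e.symm v - e.symm y).val)
        with h | h | h
      · exact h
      · exfalso
        apply Tc_ne hasym hyz
        have : ((e.symm v - e.symm z).val : ZMod n) = ((e.symm v - e.symm y).val : ZMod n) := by
          rw [h]
        rw [valCast, valCast] at this
        exact (sub_right_inj.mp this).symm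
      · exact absurd (Tc_in hasym hK1 hK2 hzv hyv h) (fun hh => Tc_asymm hasym hyz hh)
    exact Tc_in hasym hK1 hK2 hxv hzv (lt_trans lt2 lt1)
end

section
/- An oriented graph D has an excellent cyclic ordering if and only if the partially oriented complete graph D^c, obtained from D by adding an undirected edge between every pair of non-adjacent vertices, can be completed to a locally transitive tournament. -/
section ZModHelpers
set_option linter.unusedSectionVars false
variable {n : ℕ} [NeZero n]

lemma zmod_rebase (x y z : ZMod n) :
    (x - z).val = (x - y).val + (y - z).val ∨
    (x - z).val + n = (x - y).val + (y - z).val := by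
  have h : x - z = (x - y) + (y - z) := by ring
  have h2 : (x - z).val = ((x - y).val + (y - z).val) % n := by rw [h, ZMod.val_add]
  have l1 := ZMod.val_lt (x - y)
  have l2 := ZMod.val_lt (y - z)
  rcases Nat.lt_or_ge ((x - y).val + (y - z).val) n with hlt | hge
  · left; rw [h2, Nat.mod_eq_of_lt hlt]
  · right
    have h3 : ((x - y).val + (y - z).val) % n = (x - y).val + (y - z).val - n := by
      rw [Nat.mod_eq_sub_mod hge, Nat.mod_eq_of_lt (by omega)]
    omega

lemma zmod_sub_eq_zero_iff (x y : ZMod n) : (x - y).val = 0 ↔ x = y := by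
  rw [ZMod.val_eq_zero, sub_eq_zero]

lemma zmod_sub_val_cancel {i s t : ZMod n} (h : (s - i).val = (t - i).val) : s = t := by
  rcases zmod_rebase s t i with h2 | h2
  · have h3 : (s - t).val = 0 := by omega
    exact (zmod_sub_eq_zero_iff s t).mp h3
  · have := ZMod.val_lt (s - t)
    omega

lemma zmod_antisym {s t : ZMod n} (h : s ≠ t) : (s - t).val + (t - s).val = n := by
  rcases zmod_rebase s t s with h2 | h2
  · rw [sub_self, ZMod.val_zero] at h2
    have h3 : (s - t).val = 0 := by omega
    exact absurd ((zmod_sub_eq_zero_iff s t).mp h3) h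
  · rw [sub_self, ZMod.val_zero] at h2; omega

lemma zmod_antisym' (s t : ZMod n) :
    (s - t).val + (t - s).val = n ∨ ((s - t).val = 0 ∧ (t - s).val = 0) := by
  by_cases h : s = t
  · subst h; right; simp
  · left; exact zmod_antisym h

lemma zmod_rebase0 (x y : ZMod n) :
    x.val = (x - y).val + y.val ∨ x.val + n = (x - y).val + y.val := by
  have := zmod_rebase x y 0
  simpa using this

end ZModHelpers

lemma exc_tournament_loctrans {V : Type*} {A : V → V → Prop} {n : ℕ} [NeZero n]
    {f : ZMod n → V} (hT : IsTournament A) (hf : Function.Surjective f)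
    (hexc : IsExcellent A f) : IsLocallyTransitive A := by
  constructor
  · intro v x y z hvx hvy hvz hxy hyz
    obtain ⟨i, rfl⟩ := hf v
    obtain ⟨a, rfl⟩ := hf x
    obtain ⟨b, rfl⟩ := hf y
    obtain ⟨c, rfl⟩ := hf z
    by_contra hxz
    have hne : f a ≠ f c := fun h => hT.1 _ _ hxy (h ▸ hyz)
    have hzx : A (f c) (f a) := (hT.2 _ _ hne).resolve_left hxz
    have key : ∀ p q w : ZMod n, A (f i) (f w) → A (f p) (f q) →
        (q - i).val ≤ (p - i).val → (p - i).val ≤ (w - i).val → False := by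
      intro p q w h1 h2 h3 h4
      exact hexc ⟨i, w, p, q, h1, h2, h3, h4⟩
    have h1 : (a - i).val < (b - i).val := by
      by_contra h; push_neg at h; exact key a b a hvx hxy h le_rfl
    have h2 : (b - i).val < (c - i).val := by
      by_contra h; push_neg at h; exact key b c b hvy hyz h le_rfl
    have h3 : (c - i).val < (a - i).val := by
      by_contra h; push_neg at h; exact key c a c hvz hzx h le_rfl
    omega
  · intro v x y z hxv hyv hzv hxy hyz
    obtain ⟨i, rfl⟩ := hf v
    obtain ⟨a, rfl⟩ := hf x
    obtain ⟨b, rfl⟩ := hf y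
    obtain ⟨c, rfl⟩ := hf z
    by_contra hxz
    have hne : f a ≠ f c := fun h => hT.1 _ _ hxy (h ▸ hyz)
    have hzx : A (f c) (f a) := (hT.2 _ _ hne).resolve_left hxz
    have sub_helper : ∀ p w : ZMod n, (i - p).val ≤ (i - w).val →
        (p - w).val = (i - w).val - (i - p).val := by
      intro p w h
      rcases zmod_rebase i p w with h2 | h2
      · omega
      · have := ZMod.val_lt (p - w); omega
    have key : ∀ p q w : ZMod n, A (f w) (f i) → A (f p) (f q) →
        (i - p).val ≤ (i - w).val → (i - q).val ≤ (i - w).val →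
        (i - p).val ≤ (i - q).val → False := by
      intro p q w h1 h2 h3 h4 h5
      apply hexc
      refine ⟨w, i, p, q, h1, h2, ?_, ?_⟩
      · rw [sub_helper q w h4, sub_helper p w h3]; omega
      · rw [sub_helper p w h3]; omega
    have h1 : (i - b).val < (i - a).val := by
      by_contra h; push_neg at h; exact key a b b hyv hxy h le_rfl h
    have h2 : (i - c).val < (i - b).val := by
      by_contra h; push_neg at h; exact key b c c hzv hyz h le_rfl h
    have h3 : (i - a).val < (i - c).val := by
      by_contra h; push_neg at h; exact key c a a hxv hzx h le_rfl h
    omega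

section Extend
variable {V : Type*} {A : V → V → Prop} {n : ℕ} [NeZero n] {f : ZMod n → V}

lemma obstr_cov_cov (hexc : IsExcellent A f) {a b : ZMod n} (hab : a ≠ b)
    (h1 : ∃ i j, A (f i) (f j) ∧ (b - i).val ≤ (a - i).val ∧ (a - i).val ≤ (j - i).val)
    (h2 : ∃ i j, A (f i) (f j) ∧ (a - i).val ≤ (b - i).val ∧ (b - i).val ≤ (j - i).val) :
    False := by
  obtain ⟨i, j, hij, hb, ha⟩ := h1
  obtain ⟨i', j', hij', ha', hb'⟩ := h2
  apply hexc
  refine ⟨i, j, i', j', hij, hij', ?_, ?_⟩ <;>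
  · have r1 := zmod_rebase a i' i
    have r2 := zmod_rebase b i' i
    have r3 := zmod_rebase j' i' i
    have ne1 : (a - i).val ≠ (b - i).val := fun h => hab (zmod_sub_val_cancel h)
    have ne2 : (a - i').val ≠ (b - i').val := fun h => hab (zmod_sub_val_cancel h)
    have := ZMod.val_lt (a - i); have := ZMod.val_lt (b - i); have := ZMod.val_lt (j - i)
    have := ZMod.val_lt (a - i'); have := ZMod.val_lt (b - i')
    have := ZMod.val_lt (j' - i')
    have := ZMod.val_lt (i' - i); have := ZMod.val_lt (j' - i)
    omega

lemma obstr_back_back (hA : IsOrientedGraph A) (hexc : IsExcellent A f)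
    {a b : ZMod n} (hab : a ≠ b)
    (h1 : ∃ s t, A (f s) (f t) ∧ (t - a).val ≤ (s - a).val ∧ (s - a).val ≤ (b - a).val)
    (h2 : ∃ s t, A (f s) (f t) ∧ (t - b).val ≤ (s - b).val ∧ (s - b).val ≤ (a - b).val) :
    False := by
  obtain ⟨s, t, hst, hT0, hS0⟩ := h1
  obtain ⟨s', t', hst', hT1, hS1⟩ := h2
  apply hexc
  refine ⟨s, t, s', t', hst, hst', ?_, ?_⟩ <;>
  · have hstne : s ≠ t := by rintro rfl; exact hA _ _ hst hst
    have hstne' : s' ≠ t' := by rintro rfl; exact hA _ _ hst' hst'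
    have ne1 : (t - a).val ≠ (s - a).val := fun h => hstne (zmod_sub_val_cancel h).symm
    have ne2 : (t' - b).val ≠ (s' - b).val := fun h => hstne' (zmod_sub_val_cancel h).symm
    have r1 := zmod_rebase t a s
    have r2 := zmod_rebase b a s
    have r3 := zmod_rebase s' b s
    have r4 := zmod_rebase t' b s
    have an1 := zmod_antisym' a s
    have an2 := zmod_antisym hab
    have := ZMod.val_lt (t - s); have := ZMod.val_lt (s' - s); have := ZMod.val_lt (t' - s)
    have := ZMod.val_lt (b - s); have := ZMod.val_lt (a - s); have := ZMod.val_lt (s - a)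
    have := ZMod.val_lt (t - a); have := ZMod.val_lt (s' - b); have := ZMod.val_lt (t' - b)
    have := ZMod.val_lt (b - a); have := ZMod.val_lt (a - b)
    omega

lemma obstr_cov_back (hA : IsOrientedGraph A) (hexc : IsExcellent A f)
    {a b : ZMod n} (hab : a ≠ b)
    (h1 : ∃ i j, A (f i) (f j) ∧ (b - i).val ≤ (a - i).val ∧ (a - i).val ≤ (j - i).val)
    (h2 : ∃ s t, A (f s) (f t) ∧ (t - b).val ≤ (s - b).val ∧ (s - b).val ≤ (a - b).val) :
    False := by
  obtain ⟨i, j, hij, hb, ha⟩ := h1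
  obtain ⟨s', t', hst', hT1, hS1⟩ := h2
  apply hexc
  refine ⟨i, j, s', t', hij, hst', ?_, ?_⟩ <;>
  · have hstne' : s' ≠ t' := by rintro rfl; exact hA _ _ hst' hst'
    have ne1 : (a - i).val ≠ (b - i).val := fun h => hab (zmod_sub_val_cancel h)
    have ne2 : (t' - b).val ≠ (s' - b).val := fun h => hstne' (zmod_sub_val_cancel h).symm
    have r1 := zmod_rebase s' b i
    have r2 := zmod_rebase t' b i
    have r3 := zmod_rebase a b i
    have := ZMod.val_lt (a - i); have := ZMod.val_lt (b - i); have := ZMod.val_lt (j - i)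
    have := ZMod.val_lt (s' - i); have := ZMod.val_lt (t' - i)
    have := ZMod.val_lt (s' - b); have := ZMod.val_lt (t' - b); have := ZMod.val_lt (a - b)
    omega

lemma extend_dir (hf : Function.Injective f) (hA : IsOrientedGraph A)
    (hexc : IsExcellent A f)
    {a b : ZMod n} (hab : f a ≠ f b) (hvu : ¬ A (f b) (f a))
    (hnb : ¬ ∃ s t, A (f s) (f t) ∧ (t - a).val ≤ (s - a).val ∧ (s - a).val ≤ (b - a).val)
    (hnc : ¬ ∃ i j, A (f i) (f j) ∧ (b - i).val ≤ (a - i).val ∧ (a - i).val ≤ (j - i).val) :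
    ∃ A' : V → V → Prop, (∀ x y, A x y → A' x y) ∧ A' (f a) (f b) ∧
      IsOrientedGraph A' ∧ IsExcellent A' f := by
  refine ⟨fun x y => A x y ∨ (x = f a ∧ y = f b), fun x y h => Or.inl h,
    Or.inr ⟨rfl, rfl⟩, ?_, ?_⟩
  · intro x y hxy hyx
    rcases hxy with hxy | ⟨rfl, rfl⟩ <;> rcases hyx with hyx | ⟨e1, e2⟩
    · exact hA _ _ hxy hyx
    · rw [e2, e1] at hxy; exact hvu hxy
    · exact hvu hyx
    · exact hab e2
  · rintro ⟨i, j, s, t, hij, hst, c1, c2⟩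
    rcases hij with hij | ⟨hia, hjb⟩ <;> rcases hst with hst | ⟨hsa, htb⟩
    · exact hexc ⟨i, j, s, t, hij, hst, c1, c2⟩
    · have hs : s = a := hf hsa
      have ht : t = b := hf htb
      subst hs; subst ht
      exact hnc ⟨i, j, hij, c1, c2⟩
    · have hi : i = a := hf hia
      have hj : j = b := hf hjb
      subst hi; subst hj
      exact hnb ⟨s, t, hst, c1, c2⟩
    · have hi : i = a := hf hia
      have hj : j = b := hf hjb
      have hs : s = a := hf hsa
      have ht : t = b := hf htb
      rw [hi, hs, ht, sub_self, ZMod.val_zero] at c1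
      have hba : b = a := (zmod_sub_eq_zero_iff b a).mp (by omega)
      exact hab (congrArg f hba.symm)

lemma extend_one (hf : Function.Bijective f) (hA : IsOrientedGraph A)
    (hexc : IsExcellent A f) {u v : V} (huv : u ≠ v) (h1 : ¬ A u v) (h2 : ¬ A v u) :
    ∃ A' : V → V → Prop, (∀ x y, A x y → A' x y) ∧ (A' u v ∨ A' v u) ∧
      IsOrientedGraph A' ∧ IsExcellent A' f := by
  obtain ⟨a, rfl⟩ := hf.2 u
  obtain ⟨b, rfl⟩ := hf.2 v
  have hab : a ≠ b := fun h => huv (congrArg f h)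
  by_cases hsafe :
      (¬ ∃ s t, A (f s) (f t) ∧ (t - a).val ≤ (s - a).val ∧ (s - a).val ≤ (b - a).val) ∧
      (¬ ∃ i j, A (f i) (f j) ∧ (b - i).val ≤ (a - i).val ∧ (a - i).val ≤ (j - i).val)
  · obtain ⟨A', hsub, hnew, hor, hexc'⟩ := extend_dir hf.1 hA hexc huv h2 hsafe.1 hsafe.2
    exact ⟨A', hsub, Or.inl hnew, hor, hexc'⟩
  · have hBack : ¬ ∃ s t, A (f s) (f t) ∧
        (t - b).val ≤ (s - b).val ∧ (s - b).val ≤ (a - b).val := by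
      intro hb2
      rcases not_and_or.mp hsafe with h | h
      · exact obstr_back_back hA hexc hab (not_not.mp h) hb2
      · exact obstr_cov_back hA hexc hab (not_not.mp h) hb2
    have hCov : ¬ ∃ i j, A (f i) (f j) ∧
        (a - i).val ≤ (b - i).val ∧ (b - i).val ≤ (j - i).val := by
      intro hc2
      rcases not_and_or.mp hsafe with h | h
      · exact obstr_cov_back hA hexc hab.symm hc2 (not_not.mp h)
      · exact obstr_cov_cov hexc hab (not_not.mp h) hc2
    obtain ⟨A', hsub, hnew, hor, hexc'⟩ :=
      extend_dir hf.1 hA hexc (Ne.symm huv) h1 hBack hCov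
    exact ⟨A', hsub, Or.inr hnew, hor, hexc'⟩

end Extend

lemma to_tournament {V : Type*} [Fintype V] {n : ℕ} [NeZero n] {f : ZMod n → V}
    (hf : Function.Bijective f) :
    ∀ (k : ℕ) (A : V → V → Prop), IsOrientedGraph A → IsExcellent A f →
      Set.ncard {p : V × V | p.1 ≠ p.2 ∧ ¬ A p.1 p.2 ∧ ¬ A p.2 p.1} ≤ k →
      ∃ T : V → V → Prop, (∀ x y, A x y → T x y) ∧ IsTournament T ∧ IsExcellent T f := by
  intro k
  induction k with
  | zero =>
    intro A hA hexc hcard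
    refine ⟨A, fun _ _ h => h, ⟨hA, ?_⟩, hexc⟩
    intro x y hxy
    by_contra hcon
    push_neg at hcon
    have hmem : (x, y) ∈ {p : V × V | p.1 ≠ p.2 ∧ ¬ A p.1 p.2 ∧ ¬ A p.2 p.1} :=
      ⟨hxy, hcon.1, hcon.2⟩
    have hpos := (Set.ncard_pos (Set.toFinite _)).mpr ⟨_, hmem⟩
    omega
  | succ k ih =>
    intro A hA hexc hcard
    by_cases htot : ∀ x y : V, x ≠ y → A x y ∨ A y x
    · exact ⟨A, fun _ _ h => h, ⟨hA, htot⟩, hexc⟩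
    · push_neg at htot
      obtain ⟨u, v, huv, h1, h2⟩ := htot
      obtain ⟨A', hsub, hadj, hA', hexc'⟩ := extend_one hf hA hexc huv h1 h2
      have hsubs : {p : V × V | p.1 ≠ p.2 ∧ ¬ A' p.1 p.2 ∧ ¬ A' p.2 p.1} ⊆
          {p : V × V | p.1 ≠ p.2 ∧ ¬ A p.1 p.2 ∧ ¬ A p.2 p.1} := by
        rintro ⟨x, y⟩ ⟨hne, hx, hy⟩
        exact ⟨hne, fun h => hx (hsub _ _ h), fun h => hy (hsub _ _ h)⟩
      have hnotmem : (u, v) ∉ {p : V × V | p.1 ≠ p.2 ∧ ¬ A' p.1 p.2 ∧ ¬ A' p.2 p.1} := by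
        rintro ⟨-, hx, hy⟩
        rcases hadj with h | h
        · exact hx h
        · exact hy h
      have hss := (Set.ssubset_iff_of_subset hsubs).mpr ⟨(u, v), ⟨huv, h1, h2⟩, hnotmem⟩
      have hlt := Set.ncard_lt_ncard hss (Set.toFinite _)
      obtain ⟨T, hsub', hT, hexcT⟩ := ih A' hA' hexc' (by omega)
      exact ⟨T, fun x y h => hsub' x y (hsub x y h), hT, hexcT⟩


lemma loctrans_excellent {V : Type*} [Fintype V] [Nonempty V] (T : V → V → Prop)
    (hT : IsTournament T) (hLT : IsLocallyTransitive T) :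
    ∃ (f : ZMod (Fintype.card V) → V), Function.Bijective f ∧ IsExcellent T f := by
  classical
  obtain ⟨v0⟩ := (inferInstance : Nonempty V)
  set n := Fintype.card V with hn
  haveI : NeZero n := ⟨Fintype.card_pos.ne'⟩
  have irr : ∀ x : V, ¬ T x x := fun x h => hT.1 x x h h
  have asym : ∀ x y : V, T x y → ¬ T y x := hT.1
  have tri : ∀ x : V, x = v0 ∨ T v0 x ∨ T x v0 := by
    intro x
    by_cases h : x = v0
    · exact Or.inl h
    · exact Or.inr (hT.2 v0 x (Ne.symm h))
  set O : Finset V := Finset.univ.filter (fun z => T v0 z) with hO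
  set I : Finset V := Finset.univ.filter (fun z => T z v0) with hI
  have memO : ∀ z, z ∈ O ↔ T v0 z := by intro z; simp [hO]
  have memI : ∀ z, z ∈ I ↔ T z v0 := by intro z; simp [hI]
  set cO : V → ℕ := fun x => (O.filter (fun z => T z x)).card with hcO
  set cI : V → ℕ := fun x => (I.filter (fun z => T z x)).card with hcI
  set r : V → ℕ :=
    fun x => if x = v0 then 0 else if T v0 x then 1 + cO x else 1 + O.card + cI x with hr
  have rv0 : r v0 = 0 := by simp [hr]
  have rO : ∀ x, T v0 x → r x = 1 + cO x := by
    intro x hx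
    have hxne : x ≠ v0 := fun h => irr v0 (h ▸ hx)
    simp [hr, hxne, hx]
  have rI : ∀ x, T x v0 → r x = 1 + O.card + cI x := by
    intro x hx
    have hxne : x ≠ v0 := fun h => irr v0 (h ▸ hx)
    have hnx : ¬ T v0 x := fun h => asym _ _ h hx
    simp [hr, hxne, hnx]
  have cOlt : ∀ x, T v0 x → cO x < O.card := by
    intro x hx
    apply Finset.card_lt_card
    refine (Finset.ssubset_iff_of_subset (Finset.filter_subset _ _)).mpr ⟨x, ?_, ?_⟩
    · exact (memO x).mpr hx
    · intro hmem
      exact irr x (Finset.mem_filter.mp hmem).2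
  have cIlt : ∀ x, T x v0 → cI x < I.card := by
    intro x hx
    apply Finset.card_lt_card
    refine (Finset.ssubset_iff_of_subset (Finset.filter_subset _ _)).mpr ⟨x, ?_, ?_⟩
    · exact (memI x).mpr hx
    · intro hmem
      exact irr x (Finset.mem_filter.mp hmem).2
  have cardsum : 1 + O.card + I.card ≤ n := by
    have hdisj : Disjoint O I := by
      rw [Finset.disjoint_left]
      intro z hz1 hz2
      exact asym _ _ ((memO z).mp hz1) ((memI z).mp hz2)
    have hv0 : v0 ∉ O ∪ I := by
      intro h
      rcases Finset.mem_union.mp h with h | h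
      · exact irr v0 ((memO v0).mp h)
      · exact irr v0 ((memI v0).mp h)
    calc 1 + O.card + I.card = (insert v0 (O ∪ I)).card := by
          rw [Finset.card_insert_of_notMem hv0, Finset.card_union_of_disjoint hdisj]
          ring
      _ ≤ Finset.univ.card := Finset.card_le_univ _
      _ = n := Finset.card_univ
  have classO : ∀ x, T v0 x → 1 ≤ r x ∧ r x ≤ O.card := by
    intro x hx; rw [rO x hx]; have := cOlt x hx; omega
  have classI : ∀ x, T x v0 → O.card + 1 ≤ r x ∧ r x ≤ O.card + I.card := by
    intro x hx; rw [rI x hx]; have := cIlt x hx; omega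
  have rltn : ∀ x, r x < n := by
    intro x
    rcases tri x with rfl | hx | hx
    · rw [rv0]; exact Fintype.card_pos
    · have := classO x hx; omega
    · have := classI x hx; omega
  have fromRank0 : ∀ x, r x = 0 → x = v0 := by
    intro x h
    rcases tri x with rfl | hx | hx
    · rfl
    · have := classO x hx; omega
    · have := classI x hx; omega
  have fromRankO : ∀ x, 1 ≤ r x → r x ≤ O.card → T v0 x := by
    intro x h1 h2
    rcases tri x with rfl | hx | hx
    · rw [rv0] at h1; omega
    · exact hx
    · have := classI x hx; omega
  have fromRankI : ∀ x, O.card + 1 ≤ r x → T x v0 := by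
    intro x h1
    rcases tri x with rfl | hx | hx
    · rw [rv0] at h1; omega
    · have := classO x hx; omega
    · exact hx
  have monoO : ∀ x y, T v0 x → T v0 y → T x y → cO x < cO y := by
    intro x y hx hy hxy
    apply Finset.card_lt_card
    refine (Finset.ssubset_iff_of_subset ?_).mpr ⟨x, ?_, ?_⟩
    · intro z hz
      have hz' := Finset.mem_filter.mp hz
      exact Finset.mem_filter.mpr
        ⟨hz'.1, hLT.1 v0 z x y ((memO z).mp hz'.1) hx hy hz'.2 hxy⟩
    · exact Finset.mem_filter.mpr ⟨(memO x).mpr hx, hxy⟩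
    · intro hmem
      exact irr x (Finset.mem_filter.mp hmem).2
  have monoI : ∀ x y, T x v0 → T y v0 → T x y → cI x < cI y := by
    intro x y hx hy hxy
    apply Finset.card_lt_card
    refine (Finset.ssubset_iff_of_subset ?_).mpr ⟨x, ?_, ?_⟩
    · intro z hz
      have hz' := Finset.mem_filter.mp hz
      exact Finset.mem_filter.mpr
        ⟨hz'.1, hLT.2 v0 z x y ((memI z).mp hz'.1) hx hy hz'.2 hxy⟩
    · exact Finset.mem_filter.mpr ⟨(memI x).mpr hx, hxy⟩
    · intro hmem
      exact irr x (Finset.mem_filter.mp hmem).2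
  have strictO : ∀ x y, T v0 x → T v0 y → T x y → r x < r y := by
    intro x y hx hy hxy
    have := monoO x y hx hy hxy
    rw [rO x hx, rO y hy]; omega
  have strictI : ∀ x y, T x v0 → T y v0 → T x y → r x < r y := by
    intro x y hx hy hxy
    have := monoI x y hx hy hxy
    rw [rI x hx, rI y hy]; omega
  have ordO : ∀ x y, T v0 x → T v0 y → r x < r y → T x y := by
    intro x y hx hy hr'
    have hne : x ≠ y := by rintro rfl; exact lt_irrefl _ hr'
    rcases hT.2 x y hne with h | h
    · exact h
    · exact absurd (strictO y x hy hx h) (by omega)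
  have ordI : ∀ x y, T x v0 → T y v0 → r x < r y → T x y := by
    intro x y hx hy hr'
    have hne : x ≠ y := by rintro rfl; exact lt_irrefl _ hr'
    rcases hT.2 x y hne with h | h
    · exact h
    · exact absurd (strictI y x hy hx h) (by omega)
  have rinj : Function.Injective r := by
    intro x y hxy
    rcases tri x with rfl | hx | hx <;> rcases tri y with rfl | hy | hy
    · rfl
    · have := classO y hy; rw [rv0] at hxy; omega
    · have := classI y hy; rw [rv0] at hxy; omega
    · have := classO x hx; rw [rv0] at hxy; omega
    · by_contra hne
      rcases hT.2 x y hne with h | h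
      · exact absurd (strictO x y hx hy h) (by omega)
      · exact absurd (strictO y x hy hx h) (by omega)
    · have h1 := classO x hx; have h2 := classI y hy; omega
    · have := classI x hx; rw [rv0] at hxy; omega
    · have h1 := classI x hx; have h2 := classO y hy; omega
    · by_contra hne
      rcases hT.2 x y hne with h | h
      · exact absurd (strictI x y hx hy h) (by omega)
      · exact absurd (strictI y x hy hx h) (by omega)
  set g : V → ZMod n := fun x => (r x : ZMod n) with hg
  have gval : ∀ x, (g x).val = r x := fun x => ZMod.val_cast_of_lt (rltn x)
  have ginj : Function.Injective g := fun x y h => rinj (by rw [← gval x, ← gval y, h])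
  have gbij : Function.Bijective g :=
    (Fintype.bijective_iff_injective_and_card g).mpr ⟨ginj, by rw [ZMod.card]⟩
  set e := Equiv.ofBijective g gbij with he
  set f : ZMod n → V := fun i => e.symm i with hf
  have fbij : Function.Bijective f := e.symm.bijective
  have rval : ∀ i : ZMod n, i.val = r (f i) := by
    intro i
    have h1 : g (f i) = i := e.apply_symm_apply i
    rw [← gval (f i), h1]
  -- the two local-transitivity consequences used for mixed pairs
  have L1 : ∀ x x' y y' : V, T v0 x → T v0 x' → T y v0 → T y' v0 → T x y →
      (T x x' ∨ x = x') → (T y' y ∨ y' = y) → T x' y' := by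
    intro x x' y y' hx hx' hy hy' hxy hxx' hy'y
    have step1 : T x' y := by
      rcases hxx' with hxx' | rfl
      · have hne : x' ≠ y := fun h => asym _ _ hx' (h ▸ hy)
        by_contra hny
        have hyx' : T y x' := (hT.2 x' y hne).resolve_left hny
        exact asym _ _ hy (hLT.2 x' v0 x y hx' hxx' hyx' hx hxy)
      · exact hxy
    rcases hy'y with hy'y | rfl
    · have hne : x' ≠ y' := fun h => asym _ _ hx' (h ▸ hy')
      by_contra hn
      have hy'x' : T y' x' := (hT.2 x' y' hne).resolve_left hn
      exact asym _ _ hy (hLT.1 y' v0 x' y hy' hy'x' hy'y hx' step1)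
    · exact step1
  have L2 : ∀ x x' y y' : V, T x v0 → T x' v0 → T v0 y → T v0 y' → T x y →
      (T x x' ∨ x = x') → (T y' y ∨ y' = y) → T x' y' := by
    intro x x' y y' hx hx' hy hy' hxy hxx' hy'y
    have step1 : T x' y := by
      rcases hxx' with hxx' | rfl
      · have hne : x' ≠ y := fun h => asym _ _ hx' (h ▸ hy)
        by_contra hny
        have hyx' : T y x' := (hT.2 x' y hne).resolve_left hny
        exact asym _ _ hy (hLT.1 x y x' v0 hxy hxx' hx hyx' hx')
      · exact hxy
    rcases hy'y with hy'y | rfl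
    · have hne : x' ≠ y' := fun h => asym _ _ hx' (h ▸ hy')
      by_contra hn
      have hy'x' : T y' x' := (hT.2 x' y' hne).resolve_left hn
      exact hn (hLT.2 y x' v0 y' step1 hy hy'y hx' hy')
    · exact step1
  -- the core order property
  have core : ∀ i j s t : ZMod n, T (f i) (f j) → (t - i).val < (s - i).val →
      (s - i).val ≤ (j - i).val → T (f t) (f s) := by
    intro i j s t hij hlt hsj
    have Ra := rval i
    have Rb := rval j
    have Rc := rval s
    have Rd := rval t
    have RBj := zmod_rebase0 j i
    have RBs := zmod_rebase0 s i
    have RBt := zmod_rebase0 t i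
    have hvi := ZMod.val_lt i
    have hvj := ZMod.val_lt j
    have hvs := ZMod.val_lt s
    have hvt := ZMod.val_lt t
    have hvL := ZMod.val_lt (j - i)
    have hvS := ZMod.val_lt (s - i)
    have hvT := ZMod.val_lt (t - i)
    rcases tri (f i) with hiv | hiO | hiI
    · -- f i = v0
      have ha0 : i.val = 0 := by rw [Ra, hiv, rv0]
      have hjO : T v0 (f j) := by rw [← hiv]; exact hij
      have hj1 := classO _ hjO
      have e1 : (j - i).val = j.val := by rcases RBj with h | h <;> omega
      have e2 : (s - i).val = s.val := by rcases RBs with h | h <;> omega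
      have e3 : (t - i).val = t.val := by rcases RBt with h | h <;> omega
      have hsO' : T v0 (f s) := fromRankO _ (by omega) (by omega)
      by_cases hd : t.val = 0
      · have ht0 : f t = v0 := fromRank0 _ (by omega)
        rw [ht0]; exact hsO'
      · have htO' : T v0 (f t) := fromRankO _ (by omega) (by omega)
        exact ordO _ _ htO' hsO' (by omega)
    · -- f i ∈ O
      have hi1 := classO _ hiO
      rcases tri (f j) with hjv | hjO | hjI
      · exfalso; rw [hjv] at hij; exact asym _ _ hiO hij
      · -- both O
        have hab : r (f i) < r (f j) := strictO _ _ hiO hjO hij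
        have hj1 := classO _ hjO
        have eL : (j - i).val + i.val = j.val := by rcases RBj with h | h <;> omega
        have eS : s.val = (s - i).val + i.val := by rcases RBs with h | h <;> omega
        have eT : t.val = (t - i).val + i.val := by rcases RBt with h | h <;> omega
        have hsO' : T v0 (f s) := fromRankO _ (by omega) (by omega)
        have htO' : T v0 (f t) := fromRankO _ (by omega) (by omega)
        exact ordO _ _ htO' hsO' (by omega)
      · -- f i ∈ O, f j ∈ I
        have hj1 := classI _ hjI
        have hab : r (f i) < r (f j) := by omega
        have eL : (j - i).val + i.val = j.val := by rcases RBj with h | h <;> omega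
        have eS : s.val = (s - i).val + i.val := by rcases RBs with h | h <;> omega
        have eT : t.val = (t - i).val + i.val := by rcases RBt with h | h <;> omega
        by_cases hsOc : s.val ≤ O.card
        · have hsO' : T v0 (f s) := fromRankO _ (by omega) (by omega)
          have htO' : T v0 (f t) := fromRankO _ (by omega) (by omega)
          exact ordO _ _ htO' hsO' (by omega)
        · have hsI' : T (f s) v0 := fromRankI _ (by omega)
          by_cases htOc : t.val ≤ O.card
          · have htO' : T v0 (f t) := fromRankO _ (by omega) (by omega)
            have h1 : T (f i) (f t) ∨ f i = f t := by
              rcases Nat.lt_or_ge i.val t.val with h | h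
              · exact Or.inl (ordO _ _ hiO htO' (by omega))
              · exact Or.inr (rinj (by omega))
            have h2 : T (f s) (f j) ∨ f s = f j := by
              rcases Nat.lt_or_ge s.val j.val with h | h
              · exact Or.inl (ordI _ _ hsI' hjI (by omega))
              · exact Or.inr (rinj (by omega))
            exact L1 (f i) (f t) (f j) (f s) hiO htO' hjI hsI' hij h1 h2
          · have htI' : T (f t) v0 := fromRankI _ (by omega)
            exact ordI _ _ htI' hsI' (by omega)
    · -- f i ∈ I
      have hi1 := classI _ hiI
      rcases tri (f j) with hjv | hjO | hjI
      · -- f j = v0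
        have hb0 : j.val = 0 := by rw [Rb, hjv, rv0]
        have eL : (j - i).val + i.val = n := by rcases RBj with h | h <;> omega
        rcases RBs with hS | hS
        · -- s no wrap: f s ∈ I
          have hsI' : T (f s) v0 := fromRankI _ (by omega)
          rcases RBt with hTt | hTt
          · have htI' : T (f t) v0 := fromRankI _ (by omega)
            exact ordI _ _ htI' hsI' (by omega)
          · exfalso; omega
        · -- s wrap: f s = v0
          have hs0 : f s = v0 := fromRank0 _ (by omega)
          rcases RBt with hTt | hTt
          · have htI' : T (f t) v0 := fromRankI _ (by omega)
            rw [hs0]; exact htI'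
          · exfalso; omega
      · -- f i ∈ I, f j ∈ O (wrap arc)
        have hj1 := classO _ hjO
        have eL : (j - i).val + i.val = j.val + n := by rcases RBj with h | h <;> omega
        rcases RBs with hS | hS <;> rcases RBt with hTt | hTt
        · -- both no-wrap: both in I
          have hsI' : T (f s) v0 := fromRankI _ (by omega)
          have htI' : T (f t) v0 := fromRankI _ (by omega)
          exact ordI _ _ htI' hsI' (by omega)
        · exfalso; omega
        · -- s wrap (O or v0), t no-wrap (I)
          have htI' : T (f t) v0 := fromRankI _ (by omega)
          by_cases hc0 : s.val = 0
          · have hs0 : f s = v0 := fromRank0 _ (by omega)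
            rw [hs0]; exact htI'
          · have hsO' : T v0 (f s) := fromRankO _ (by omega) (by omega)
            have h1 : T (f i) (f t) ∨ f i = f t := by
              rcases Nat.lt_or_ge i.val t.val with h | h
              · exact Or.inl (ordI _ _ hiI htI' (by omega))
              · exact Or.inr (rinj (by omega))
            have h2 : T (f s) (f j) ∨ f s = f j := by
              rcases Nat.lt_or_ge s.val j.val with h | h
              · exact Or.inl (ordO _ _ hsO' hjO (by omega))
              · exact Or.inr (rinj (by omega))
            exact L2 (f i) (f t) (f j) (f s) hiI htI' hjO hsO' hij h1 h2
        · -- both wrap: in O ∪ {v0}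
          by_cases hd0 : t.val = 0
          · have ht0 : f t = v0 := fromRank0 _ (by omega)
            have hsO' : T v0 (f s) := fromRankO _ (by omega) (by omega)
            rw [ht0]; exact hsO'
          · have hsO' : T v0 (f s) := fromRankO _ (by omega) (by omega)
            have htO' : T v0 (f t) := fromRankO _ (by omega) (by omega)
            exact ordO _ _ htO' hsO' (by omega)
      · -- both I
        have hj1 := classI _ hjI
        have hab : r (f i) < r (f j) := strictI _ _ hiI hjI hij
        have eL : (j - i).val + i.val = j.val := by rcases RBj with h | h <;> omega
        have eS : s.val = (s - i).val + i.val := by rcases RBs with h | h <;> omega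
        have eT : t.val = (t - i).val + i.val := by rcases RBt with h | h <;> omega
        have hsI' : T (f s) v0 := fromRankI _ (by omega)
        have htI' : T (f t) v0 := fromRankI _ (by omega)
        exact ordI _ _ htI' hsI' (by omega)
  refine ⟨f, fbij, ?_⟩
  rintro ⟨i, j, s, t, hij, hst, hts, hsj⟩
  by_cases heq : (t - i).val = (s - i).val
  · have hts' : t = s := zmod_sub_val_cancel heq
    rw [hts'] at hst
    exact irr _ hst
  · have hlt : (t - i).val < (s - i).val := lt_of_le_of_ne hts heq
    exact asym _ _ hst (core i j s t hij hlt hsj)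

/-- An oriented graph `A` has an excellent cyclic ordering iff
the partially oriented complete graph `A^c` (add an edge between each pair of
non-adjacent vertices) can be completed to a locally transitive tournament. -/
theorem stmt_5 {V : Type*} [Fintype V] [Nonempty V] (A : V → V → Prop)
    (hA : IsOrientedGraph A) :
    (∃ (n : ℕ) (f : ZMod n → V), Function.Bijective f ∧ IsExcellent A f) ↔
    (∃ T : V → V → Prop, CompletesToTournament A T ∧ IsLocallyTransitive T) := by
  constructor
  · rintro ⟨nn, f, hbij, hexc⟩
    have hn : nn ≠ 0 := by
      rintro rfl
      haveI : Infinite (ZMod 0) := (inferInstance : Infinite ℤ)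
      haveI : Finite (ZMod 0) := Finite.of_equiv V (Equiv.ofBijective f hbij).symm
      exact not_finite (ZMod 0)
    haveI : NeZero nn := ⟨hn⟩
    obtain ⟨T, hsub, hTt, hexcT⟩ := to_tournament hbij
      (Set.ncard {p : V × V | p.1 ≠ p.2 ∧ ¬ A p.1 p.2 ∧ ¬ A p.2 p.1}) A hA hexc le_rfl
    exact ⟨T, ⟨hsub, fun u v hTuv hAvu => hTt.1 u v hTuv (hsub v u hAvu), hTt⟩,
      exc_tournament_loctrans hTt hbij.2 hexcT⟩
  · rintro ⟨T, hcomp, hlt⟩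
    obtain ⟨f, hbij, hexcT⟩ := loctrans_excellent T hcomp.2.2 hlt
    refine ⟨Fintype.card V, f, hbij, ?_⟩
    rintro ⟨i, j, s, t, h1, h2, h3, h4⟩
    exact hexcT ⟨i, j, s, t, hcomp.1 _ _ h1, hcomp.1 _ _ h2, h3, h4⟩
end

section
/- Let W be the partially oriented wheel on seven vertices c, c_11, c_12, c_21, c_22, c_31, c_32, where c dominates all six rim vertices, the rim contains the arcs (c_12, c_21), (c_22, c_31), (c_32, c_11), and the edges c_11 c_12, c_21 c_22, c_31 c_32 are unoriented. If these three edges are oriented as (c_11, c_12), (c_21, c_22), (c_31, c_32), the resulting oriented graph cannot be completed to a locally transitive tournament on seven vertices; for each of the other seven orientations of these three edges, the resulting oriented graph can be completed to a locally transitive tournament. -/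
/-- The partially oriented 6-wheel `W` with hub `c = 0` and rim
`c₁₁ = 1, c₁₂ = 2, c₂₁ = 3, c₂₂ = 4, c₃₁ = 5, c₃₂ = 6`, in which the three
unoriented rim edges `c₁₁c₁₂, c₂₁c₂₂, c₃₁c₃₂` have been oriented according to
the booleans `b₁, b₂, b₃` (`true` = forward, e.g. `(c₁₁, c₁₂)`). -/
def wheelArcs (b₁ b₂ b₃ : Bool) : Fin 7 → Fin 7 → Prop := fun u v =>
  (u = 0 ∧ v ≠ 0) ∨ (u = 2 ∧ v = 3) ∨ (u = 4 ∧ v = 5) ∨ (u = 6 ∧ v = 1) ∨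
  (if b₁ then u = 1 ∧ v = 2 else u = 2 ∧ v = 1) ∨
  (if b₂ then u = 3 ∧ v = 4 else u = 4 ∧ v = 3) ∨
  (if b₃ then u = 5 ∧ v = 6 else u = 6 ∧ v = 5)

def Tttf : Fin 7 → Fin 7 → Prop := fun u v => ((u.val, v.val) ∈ [(0,1),(0,2),(0,3),(0,4),(0,5),(0,6),(1,2),(1,3),(1,4),(1,5),(2,3),(2,4),(2,5),(3,4),(3,5),(4,5),(6,1),(6,2),(6,3),(6,4),(6,5)] : Prop)
def Ttft : Fin 7 → Fin 7 → Prop := fun u v => ((u.val, v.val) ∈ [(0,1),(0,2),(0,3),(0,4),(0,5),(0,6),(1,2),(1,3),(2,3),(4,1),(4,2),(4,3),(4,5),(4,6),(5,1),(5,2),(5,3),(5,6),(6,1),(6,2),(6,3)] : Prop)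
def Ttff : Fin 7 → Fin 7 → Prop := fun u v => ((u.val, v.val) ∈ [(0,1),(0,2),(0,3),(0,4),(0,5),(0,6),(1,2),(1,3),(2,3),(4,1),(4,2),(4,3),(4,5),(5,1),(5,2),(5,3),(6,1),(6,2),(6,3),(6,4),(6,5)] : Prop)
def Tftt : Fin 7 → Fin 7 → Prop := fun u v => ((u.val, v.val) ∈ [(0,1),(0,2),(0,3),(0,4),(0,5),(0,6),(2,1),(2,3),(2,4),(2,5),(2,6),(3,1),(3,4),(3,5),(3,6),(4,1),(4,5),(4,6),(5,1),(5,6),(6,1)] : Prop)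
def Tftf : Fin 7 → Fin 7 → Prop := fun u v => ((u.val, v.val) ∈ [(0,1),(0,2),(0,3),(0,4),(0,5),(0,6),(2,1),(2,3),(2,4),(2,5),(3,1),(3,4),(3,5),(4,1),(4,5),(5,1),(6,1),(6,2),(6,3),(6,4),(6,5)] : Prop)
def Tfft : Fin 7 → Fin 7 → Prop := fun u v => ((u.val, v.val) ∈ [(0,1),(0,2),(0,3),(0,4),(0,5),(0,6),(2,1),(2,3),(3,1),(4,1),(4,2),(4,3),(4,5),(4,6),(5,1),(5,2),(5,3),(5,6),(6,1),(6,2),(6,3)] : Prop)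
def Tfff : Fin 7 → Fin 7 → Prop := fun u v => ((u.val, v.val) ∈ [(0,1),(0,2),(0,3),(0,4),(0,5),(0,6),(2,1),(2,3),(3,1),(4,1),(4,2),(4,3),(4,5),(5,1),(5,2),(5,3),(6,1),(6,2),(6,3),(6,4),(6,5)] : Prop)

instance : DecidableRel Tttf := fun u v => by unfold Tttf; infer_instance
instance : DecidableRel Ttft := fun u v => by unfold Ttft; infer_instance
instance : DecidableRel Ttff := fun u v => by unfold Ttff; infer_instance
instance : DecidableRel Tftt := fun u v => by unfold Tftt; infer_instance
instance : DecidableRel Tftf := fun u v => by unfold Tftf; infer_instance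
instance : DecidableRel Tfft := fun u v => by unfold Tfft; infer_instance
instance : DecidableRel Tfff := fun u v => by unfold Tfff; infer_instance
instance (b₁ b₂ b₃) : DecidableRel (wheelArcs b₁ b₂ b₃) := fun u v => by unfold wheelArcs; infer_instance

set_option maxHeartbeats 1000000 in
/-- Orienting the three free edges of the wheel `W` all
forward yields an oriented graph with no completion to a locally transitive
tournament on 7 vertices; each of the remaining 7 orientations yields one that
can be so completed. -/
theorem stmt_7 (b₁ b₂ b₃ : Bool) :
    (∃ T : Fin 7 → Fin 7 → Prop,
        CompletesToTournament (wheelArcs b₁ b₂ b₃) T ∧ IsLocallyTransitive T) ↔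
      ¬ (b₁ = true ∧ b₂ = true ∧ b₃ = true) := by
  constructor
  · rintro ⟨T, ⟨hsub, _, ⟨hasym, _⟩⟩, hout, _⟩ ⟨rfl, rfl, rfl⟩
    have h01 : T 0 1 := hsub 0 1 (Or.inl ⟨rfl, by decide⟩)
    have h02 : T 0 2 := hsub 0 2 (Or.inl ⟨rfl, by decide⟩)
    have h03 : T 0 3 := hsub 0 3 (Or.inl ⟨rfl, by decide⟩)
    have h04 : T 0 4 := hsub 0 4 (Or.inl ⟨rfl, by decide⟩)
    have h05 : T 0 5 := hsub 0 5 (Or.inl ⟨rfl, by decide⟩)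
    have h06 : T 0 6 := hsub 0 6 (Or.inl ⟨rfl, by decide⟩)
    have h12 : T 1 2 := hsub 1 2 (by unfold wheelArcs; simp)
    have h23 : T 2 3 := hsub 2 3 (by unfold wheelArcs; simp)
    have h34 : T 3 4 := hsub 3 4 (by unfold wheelArcs; simp)
    have h45 : T 4 5 := hsub 4 5 (by unfold wheelArcs; simp)
    have h56 : T 5 6 := hsub 5 6 (by unfold wheelArcs; simp)
    have h61 : T 6 1 := hsub 6 1 (by unfold wheelArcs; simp)
    have h13 : T 1 3 := hout 0 1 2 3 h01 h02 h03 h12 h23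
    have h14 : T 1 4 := hout 0 1 3 4 h01 h03 h04 h13 h34
    have h15 : T 1 5 := hout 0 1 4 5 h01 h04 h05 h14 h45
    have h16 : T 1 6 := hout 0 1 5 6 h01 h05 h06 h15 h56
    exact hasym 1 6 h16 h61
  · intro h
    match b₁, b₂, b₃ with
    | true, true, true => exact absurd ⟨rfl, rfl, rfl⟩ h
    | true, true, false =>
      refine ⟨Tttf, ?_⟩
      unfold CompletesToTournament IsTournament IsLocallyTransitive IsOrientedGraph
      exact ⟨⟨by decide, by decide, by decide, by decide⟩, by decide, by decide⟩
    | true, false, true =>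
      refine ⟨Ttft, ?_⟩
      unfold CompletesToTournament IsTournament IsLocallyTransitive IsOrientedGraph
      exact ⟨⟨by decide, by decide, by decide, by decide⟩, by decide, by decide⟩
    | true, false, false =>
      refine ⟨Ttff, ?_⟩
      unfold CompletesToTournament IsTournament IsLocallyTransitive IsOrientedGraph
      exact ⟨⟨by decide, by decide, by decide, by decide⟩, by decide, by decide⟩
    | false, true, true =>
      refine ⟨Tftt, ?_⟩
      unfold CompletesToTournament IsTournament IsLocallyTransitive IsOrientedGraph
      exact ⟨⟨by decide, by decide, by decide, by decide⟩, by decide, by decide⟩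
    | false, true, false =>
      refine ⟨Tftf, ?_⟩
      unfold CompletesToTournament IsTournament IsLocallyTransitive IsOrientedGraph
      exact ⟨⟨by decide, by decide, by decide, by decide⟩, by decide, by decide⟩
    | false, false, true =>
      refine ⟨Tfft, ?_⟩
      unfold CompletesToTournament IsTournament IsLocallyTransitive IsOrientedGraph
      exact ⟨⟨by decide, by decide, by decide, by decide⟩, by decide, by decide⟩
    | false, false, false =>
      refine ⟨Tfff, ?_⟩
      unfold CompletesToTournament IsTournament IsLocallyTransitive IsOrientedGraph
      exact ⟨⟨by decide, by decide, by decide, by decide⟩, by decide, by decide⟩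
end

section
/- If a vertex c of an oriented graph D has a directed cycle contained in its out-neighbourhood, then D is not a spanning subdigraph of any locally transitive tournament, and consequently D has no excellent cyclic ordering. -/
/-- If a vertex `c` of an oriented graph has a directed cycle
contained in its out-neighbourhood, then the oriented graph is not a spanning
subdigraph of any locally transitive tournament, and it has no excellent
cyclic ordering. -/
theorem stmt_8 {V : Type*} [Fintype V] (A : V → V → Prop)
    (hA : IsOrientedGraph A) (c : V)
    (hcyc : HasCycleIn A {u | A c u}) :
    (¬ ∃ T : V → V → Prop, (∀ u v : V, A u v → T u v) ∧
        IsTournament T ∧ IsLocallyTransitive T) ∧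
    (¬ ∃ (n : ℕ) (f : ZMod n → V), Function.Bijective f ∧ IsExcellent A f) := by
  obtain ⟨n, f, hn, hinj, hmem, harc⟩ := hcyc
  haveI : NeZero n := ⟨by omega⟩
  constructor
  · rintro ⟨T, hsub, hT, hL⟩
    have hTc : ∀ i, T c (f i) := fun i => hsub _ _ (hmem i)
    have key : ∀ k : ℕ, 1 ≤ k → k ≤ n - 1 → T (f 0) (f (k : ZMod n)) := by
      intro k
      induction k with
      | zero => omega
      | succ m ih =>
        intro h1 h2
        rcases Nat.eq_or_lt_of_le h1 with h | h
        · have hm : m = 0 := by omega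
          subst hm
          simpa using hsub _ _ (harc 0)
        · have hT0m := ih (by omega) (by omega)
          have harcm : T (f (m : ZMod n)) (f ((m : ZMod n) + 1)) := hsub _ _ (harc m)
          have hcast : ((m : ZMod n) + 1) = ((m + 1 : ℕ) : ZMod n) := by push_cast; ring
          rw [hcast] at harcm
          exact hL.1 c _ _ _ (hTc 0) (hTc _) (hTc _) hT0m harcm
    have hlast := key (n - 1) (by omega) le_rfl
    have hcast : ((n - 1 : ℕ) : ZMod n) + 1 = 0 := by
      have h1 : (((n - 1) + 1 : ℕ) : ZMod n) = ((n - 1 : ℕ) : ZMod n) + 1 := by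
        push_cast; ring
      have h2 : (n - 1) + 1 = n := by omega
      rw [← h1, h2, ZMod.natCast_self]
    have harcl : T (f ((n - 1 : ℕ) : ZMod n)) (f 0) := by
      have := hsub _ _ (harc ((n - 1 : ℕ) : ZMod n))
      rwa [hcast] at this
    exact hT.1 _ _ hlast harcl
  · rintro ⟨m, g, hgbij, hex⟩
    have hfin : Finite (ZMod m) := Finite.of_equiv V (Equiv.ofBijective g hgbij).symm
    haveI : NeZero m := by
      constructor
      rintro rfl
      haveI : Infinite (ZMod 0) := Int.infinite
      exact not_finite (ZMod 0)
    set e := Equiv.ofBijective g hgbij with he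
    have hge : ∀ v : V, g (e.symm v) = v := fun v => e.apply_symm_apply v
    set p : ZMod n → ℕ := fun k => (e.symm (f k) - e.symm c).val with hp
    obtain ⟨k, -, hk⟩ := Finset.exists_max_image Finset.univ p ⟨0, Finset.mem_univ 0⟩
    exact hex ⟨e.symm c, e.symm (f k), e.symm (f k), e.symm (f (k + 1)),
      by rw [hge, hge]; exact hmem k,
      by rw [hge, hge]; exact harc k,
      hk (k + 1) (Finset.mem_univ _), le_rfl⟩
end

section
/- Let G be a graph and G^+ its auxiliary graph. Then G has a local tournament orientation if and only if G^+ is bipartite. Moreover, when G^+ is bipartite, for any two vertices (u,v) and (u',v') at odd distance in G^+, every local tournament orientation of G contains exactly one of them as an arc, and the arc set of every local tournament orientation of G is a colour class of G^+. -/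
/-- The vertex set of the auxiliary graph `G⁺`: ordered pairs `(u,v)` with
`uv` an edge of `G`. -/
abbrev EdgePair {V : Type*} (G : SimpleGraph V) := {p : V × V // G.Adj p.1 p.2}

/-- The adjacency rule of the auxiliary graph `G⁺`. -/
def auxRel {V : Type*} (G : SimpleGraph V) (x y : EdgePair G) : Prop :=
  (x.1.1 = y.1.1 ∧ ¬ G.Adj x.1.2 y.1.2) ∨
  (¬ G.Adj x.1.1 y.1.1 ∧ x.1.2 = y.1.2) ∨
  (x.1.1 = y.1.2 ∧ x.1.2 = y.1.1)

/-- The auxiliary graph `G⁺` of a graph `G`. -/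
def auxGraph {V : Type*} (G : SimpleGraph V) : SimpleGraph (EdgePair G) :=
  SimpleGraph.fromRel (auxRel G)

/-- An orientation of a graph `G`: an asymmetric choice of exactly one
direction for each edge of `G`. -/
def IsOrientation {V : Type*} (G : SimpleGraph V) (D : V → V → Prop) : Prop :=
  (∀ u v : V, D u v → G.Adj u v) ∧ (∀ u v : V, D u v → ¬ D v u) ∧
  (∀ u v : V, G.Adj u v → D u v ∨ D v u)

/-- The arcs `A` of a partial orientation of `G` are consentaneous: no two arcs
correspond to vertices of `G⁺` at odd distance, and for vertices of `G⁺` at even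
distance (in the same component) either both corresponding arcs are present or
neither is. -/
def Consentaneous {V : Type*} (G : SimpleGraph V) (A : V → V → Prop) : Prop :=
  (¬ ∃ x y : EdgePair G, A x.1.1 x.1.2 ∧ A y.1.1 y.1.2 ∧ Odd ((auxGraph G).dist x y)) ∧
  (∀ x y : EdgePair G, (auxGraph G).Reachable x y → Even ((auxGraph G).dist x y) →
    (A x.1.1 x.1.2 ↔ A y.1.1 y.1.2))

/-- The edge `uv` of the underlying graph is oriented in the partial orientation `A`. -/
def EdgeOriented {V : Type*} (A : V → V → Prop) (u v : V) : Prop := A u v ∨ A v u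

/-- `P = (G, A)` has no bad triple: no triangle of `G` whose three edges lie in
three different connected components of `G⁺` and exactly two of whose edges are
oriented. -/
def NoBadTriple {V : Type*} (G : SimpleGraph V) (A : V → V → Prop) : Prop :=
  ¬ ∃ (x y z : V) (hxy : G.Adj x y) (hyz : G.Adj y z) (hzx : G.Adj z x),
    ¬ (auxGraph G).Reachable ⟨(x, y), hxy⟩ ⟨(y, z), hyz⟩ ∧
    ¬ (auxGraph G).Reachable ⟨(y, z), hyz⟩ ⟨(z, x), hzx⟩ ∧
    ¬ (auxGraph G).Reachable ⟨(x, y), hxy⟩ ⟨(z, x), hzx⟩ ∧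
    ((EdgeOriented A x y ∧ EdgeOriented A y z ∧ ¬ EdgeOriented A z x) ∨
     (EdgeOriented A x y ∧ ¬ EdgeOriented A y z ∧ EdgeOriented A z x) ∨
     (¬ EdgeOriented A x y ∧ EdgeOriented A y z ∧ EdgeOriented A z x))

open Classical in
/-- The key alternation lemma: along an edge of `auxRel` the two arcs of a
local tournament orientation alternate. -/
lemma auxRel_alternate {V : Type*} {G : SimpleGraph V} {D : V → V → Prop}
    (hO : IsOrientation G D) (hL : IsLocalTournament D)
    (x y : EdgePair G) (hne : x ≠ y) (h : auxRel G x y) :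
    (D x.1.1 x.1.2 ↔ ¬ D y.1.1 y.1.2) := by
  obtain ⟨⟨u, v⟩, huv⟩ := x
  obtain ⟨⟨u', v'⟩, hu'v'⟩ := y
  simp only at *
  rcases h with ⟨h1, h2⟩ | ⟨h1, h2⟩ | ⟨h1, h2⟩
  · subst h1
    have hvv' : v ≠ v' := by
      intro hv; exact hne (by subst hv; rfl)
    constructor
    · intro hd hd'
      rcases hL.2.1 u v v' hd hd' hvv' with hh | hh
      · exact h2 (hO.1 _ _ hh)
      · exact h2 ((hO.1 _ _ hh).symm)
    · intro hnd
      by_contra hnd2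
      have hvu : D v u := (hO.2.2 u v huv).resolve_left hnd2
      have hv'u : D v' u := (hO.2.2 u v' hu'v').resolve_left hnd
      rcases hL.2.2 u v v' hvu hv'u hvv' with hh | hh
      · exact h2 (hO.1 _ _ hh)
      · exact h2 ((hO.1 _ _ hh).symm)
  · subst h2
    have huu' : u ≠ u' := by
      intro hu; exact hne (by subst hu; rfl)
    constructor
    · intro hd hd'
      rcases hL.2.2 v u u' hd hd' huu' with hh | hh
      · exact h1 (hO.1 _ _ hh)
      · exact h1 ((hO.1 _ _ hh).symm)
    · intro hnd
      by_contra hnd2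
      have hvu : D v u := (hO.2.2 u v huv).resolve_left hnd2
      have hvu' : D v u' := (hO.2.2 u' v hu'v').resolve_left hnd
      rcases hL.2.1 v u u' hvu hvu' huu' with hh | hh
      · exact h1 (hO.1 _ _ hh)
      · exact h1 ((hO.1 _ _ hh).symm)
  · subst h1; subst h2
    constructor
    · intro hd; exact fun hd' => hO.2.1 _ _ hd hd'
    · intro hnd; exact (hO.2.2 _ _ huv).resolve_right hnd

open Classical in
/-- The `Bool` colouring of `G⁺` induced by a local tournament orientation. -/
noncomputable def orientColoring {V : Type*} {G : SimpleGraph V} {D : V → V → Prop}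
    (hO : IsOrientation G D) (hL : IsLocalTournament D) :
    (auxGraph G).Coloring Bool :=
  SimpleGraph.Coloring.mk (fun x => if D x.1.1 x.1.2 then true else false) (by
    intro x y hadj
    rw [auxGraph, SimpleGraph.fromRel_adj] at hadj
    obtain ⟨hne, h | h⟩ := hadj
    · have := auxRel_alternate hO hL x y hne h
      by_cases hx : D x.1.1 x.1.2 <;> by_cases hy : D y.1.1 y.1.2 <;>
        simp_all
    · have := auxRel_alternate hO hL y x (Ne.symm hne) h
      by_cases hx : D x.1.1 x.1.2 <;> by_cases hy : D y.1.1 y.1.2 <;>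
        simp_all)

open Classical in
lemma orientColoring_apply {V : Type*} {G : SimpleGraph V} {D : V → V → Prop}
    (hO : IsOrientation G D) (hL : IsLocalTournament D) (x : EdgePair G) :
    orientColoring hO hL x = if D x.1.1 x.1.2 then true else false := rfl

/-- Along any walk in a `Bool`-coloured graph, the colours at the endpoints agree
iff the length of the walk is even. -/
lemma coloring_walk_parity {V : Type*} {G : SimpleGraph V} (C : G.Coloring Bool)
    {x y : V} (p : G.Walk x y) : (C x = C y) ↔ Even p.length := by
  induction p with
  | nil => simp
  | @cons a b c h p ih =>
    have hab : C a ≠ C b := C.valid h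
    simp only [SimpleGraph.Walk.length_cons, Nat.even_add_one, ← ih]
    revert hab; cases hC : C a <;> cases hC' : C b <;> cases hC'' : C c <;> simp

/-- A graph `G` has a local tournament orientation iff its
auxiliary graph `G⁺` is bipartite; moreover, when `G⁺` is bipartite, any two
vertices of `G⁺` at odd distance give rise to exactly one arc of any local
tournament orientation of `G`, and the arc set of every local tournament
orientation of `G` is a colour class of `G⁺`. -/
theorem stmt_10 {V : Type*} [Fintype V] (G : SimpleGraph V) :
    ((∃ D : V → V → Prop, IsOrientation G D ∧ IsLocalTournament D) ↔
      (auxGraph G).Colorable 2) ∧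
    (∀ D : V → V → Prop, IsOrientation G D → IsLocalTournament D →
      ∀ x y : EdgePair G, Odd ((auxGraph G).dist x y) →
        (D x.1.1 x.1.2 ↔ ¬ D y.1.1 y.1.2)) ∧
    (∀ D : V → V → Prop, IsOrientation G D → IsLocalTournament D →
      ∃ C : (auxGraph G).Coloring Bool,
        ∀ x : EdgePair G, D x.1.1 x.1.2 ↔ C x = true) := by
  classical
  -- alternation at odd distance, for any local tournament orientation
  have odd_alt : ∀ D : V → V → Prop, IsOrientation G D → IsLocalTournament D →
      ∀ x y : EdgePair G, Odd ((auxGraph G).dist x y) →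
        (D x.1.1 x.1.2 ↔ ¬ D y.1.1 y.1.2) := by
    intro D hO hL x y hodd
    have hne0 : (auxGraph G).dist x y ≠ 0 := by
      intro h0; rw [h0] at hodd; simp at hodd
    have hr : (auxGraph G).Reachable x y := by
      by_contra hnr
      exact hne0 (SimpleGraph.dist_eq_zero_of_not_reachable hnr)
    obtain ⟨p, hp⟩ := hr.exists_walk_length_eq_dist
    have hC := coloring_walk_parity (orientColoring hO hL) p
    rw [hp] at hC
    have hCne : orientColoring hO hL x ≠ orientColoring hO hL y := by
      intro h
      exact (Nat.not_even_iff_odd.mpr hodd) (hC.mp h)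
    rw [orientColoring_apply, orientColoring_apply] at hCne
    by_cases hx : D x.1.1 x.1.2 <;> by_cases hy : D y.1.1 y.1.2 <;> simp_all
  refine ⟨⟨fun ⟨D, hO, hL⟩ => ?_, fun ⟨C⟩ => ?_⟩, odd_alt, ?_⟩
  · have := (orientColoring hO hL).colorable
    simpa using this
  · -- construct the orientation from a 2-colouring C : G⁺ → Fin 2
    set D : V → V → Prop := fun u v => ∃ h : G.Adj u v, C ⟨(u, v), h⟩ = 0 with hD
    have flip : ∀ (x y : EdgePair G), x ≠ y → auxRel G x y →
        ¬ (C x = 0 ∧ C y = 0) := by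
      intro x y hne h hc
      have hadj : (auxGraph G).Adj x y := by
        rw [auxGraph, SimpleGraph.fromRel_adj]; exact ⟨hne, Or.inl h⟩
      exact C.valid hadj (hc.1.trans hc.2.symm)
    have hrev : ∀ u v (h : G.Adj u v), auxRel G ⟨(u, v), h⟩ ⟨(v, u), h.symm⟩ :=
      fun u v h => Or.inr (Or.inr ⟨rfl, rfl⟩)
    have hneuv : ∀ u v (h : G.Adj u v),
        (⟨(u, v), h⟩ : EdgePair G) ≠ ⟨(v, u), h.symm⟩ := by
      intro u v h heq
      have := congrArg (fun z : EdgePair G => z.1.1) heq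
      exact h.ne this
    have hasym : ∀ u v : V, D u v → ¬ D v u := by
      rintro u v ⟨h, hc⟩ ⟨h', hc'⟩
      exact flip ⟨(u, v), h⟩ ⟨(v, u), h.symm⟩ (hneuv u v h) (hrev u v h) ⟨hc, hc'⟩
    have htot : ∀ u v : V, G.Adj u v → D u v ∨ D v u := by
      intro u v h
      have hCne : C ⟨(u, v), h⟩ ≠ C ⟨(v, u), h.symm⟩ := by
        refine C.valid ?_
        rw [auxGraph, SimpleGraph.fromRel_adj]
        exact ⟨hneuv u v h, Or.inl (hrev u v h)⟩
      by_cases h0 : C ⟨(u, v), h⟩ = 0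
      · exact Or.inl ⟨h, h0⟩
      · refine Or.inr ⟨h.symm, ?_⟩
        by_contra h1
        exact hCne ((Fin.eq_one_of_ne_zero _ h0).trans
          (Fin.eq_one_of_ne_zero _ h1).symm)
    have hOD : IsOrientation G D := ⟨fun u v hd => hd.1, hasym, htot⟩
    refine ⟨D, hOD, hasym, ?_, ?_⟩
    · intro v x y hvx hvy hxy
      have hadjxy : G.Adj x y := by
        by_contra hno
        refine flip ⟨(v, x), hvx.1⟩ ⟨(v, y), hvy.1⟩ ?_ (Or.inl ⟨rfl, hno⟩)
          ⟨hvx.2, hvy.2⟩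
        intro heq
        exact hxy (congrArg (fun z : EdgePair G => z.1.2) heq)
      exact htot x y hadjxy
    · intro v x y hxv hyv hxy
      have hadjxy : G.Adj x y := by
        by_contra hno
        refine flip ⟨(x, v), hxv.1⟩ ⟨(y, v), hyv.1⟩ ?_ (Or.inr (Or.inl ⟨hno, rfl⟩))
          ⟨hxv.2, hyv.2⟩
        intro heq
        exact hxy (congrArg (fun z : EdgePair G => z.1.1) heq)
      exact htot x y hadjxy
  · intro D hO hL
    refine ⟨orientColoring hO hL, fun x => ?_⟩
    rw [orientColoring_apply]
    by_cases hx : D x.1.1 x.1.2 <;> simp_all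
end

section
/- Given a partially oriented graph P, it can be decided in polynomial time whether P can be completed to a local tournament; specifically, P can be so completed if and only if the auxiliary graph of the underlying graph G of P is bipartite and the set of vertices of G^+ corresponding to the arcs of P is contained in a single colour class of G^+. -/
/-- Key lemma: if `D` is a local-tournament orientation of `G` and `auxRel G x y`
holds with `x ≠ y`, then exactly one of the corresponding arcs is in `D`. -/
lemma auxRel_key {V : Type*} (G : SimpleGraph V) (D : V → V → Prop)
    (hO : IsOrientation G D) (hLT : IsLocalTournament D)
    {x y : EdgePair G} (hr : auxRel G x y) (hne : x ≠ y) :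
    D x.1.1 x.1.2 ↔ ¬ D y.1.1 y.1.2 := by
  classical
  obtain ⟨hGsub, hDasym, htot⟩ := hO
  obtain ⟨-, hout, hin⟩ := hLT
  obtain ⟨⟨a, b⟩, hx⟩ := x
  obtain ⟨⟨c, d⟩, hy⟩ := y
  simp only at *
  rcases hr with ⟨h1, h2⟩ | ⟨⟨h1, h2⟩ | ⟨h1, h2⟩⟩
  · subst h1
    have hbd : b ≠ d := by
      rintro rfl; exact hne rfl
    constructor
    · intro hab had
      rcases hout a b d hab had hbd with h | h
      · exact h2 (hGsub _ _ h)
      · exact h2 ((hGsub _ _ h).symm)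
    · intro had
      have hda : D d a := by
        rcases htot _ _ hy with h | h
        · exact absurd h had
        · exact h
      by_contra hab
      have hba : D b a := by
        rcases htot _ _ hx with h | h
        · exact absurd h hab
        · exact h
      rcases hin a b d hba hda hbd with h | h
      · exact h2 (hGsub _ _ h)
      · exact h2 ((hGsub _ _ h).symm)
  · subst h2
    have hac : a ≠ c := by
      rintro rfl; exact hne rfl
    constructor
    · intro hab hcb
      rcases hin b a c hab hcb hac with h | h
      · exact h1 (hGsub _ _ h)
      · exact h1 ((hGsub _ _ h).symm)
    · intro hcb
      have hbc : D b c := by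
        rcases htot _ _ hy with h | h
        · exact absurd h hcb
        · exact h
      by_contra hab
      have hba : D b a := by
        rcases htot _ _ hx with h | h
        · exact absurd h hab
        · exact h
      rcases hout b a c hba hbc hac with h | h
      · exact h1 (hGsub _ _ h)
      · exact h1 ((hGsub _ _ h).symm)
  · subst h1; subst h2
    constructor
    · intro hab; exact hDasym _ _ hab
    · intro hba
      rcases htot _ _ hx with h | h
      · exact h
      · exact absurd h hba

lemma adj_key {V : Type*} (G : SimpleGraph V) (D : V → V → Prop)
    (hO : IsOrientation G D) (hLT : IsLocalTournament D)
    {x y : EdgePair G} (h : (auxGraph G).Adj x y) :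
    D x.1.1 x.1.2 ↔ ¬ D y.1.1 y.1.2 := by
  rw [auxGraph, SimpleGraph.fromRel_adj] at h
  obtain ⟨hne, hr | hr⟩ := h
  · exact auxRel_key G D hO hLT hr hne
  · have := auxRel_key G D hO hLT hr hne.symm
    tauto

/-- (The characterization behind the polynomial-time
algorithm.)  A partially oriented graph, with underlying graph `G` and arc
set `A`, can be completed to a local tournament iff the auxiliary graph
`G⁺` is bipartite and the vertices of `G⁺` corresponding to the arcs of
`A` are contained in a single colour class of `G⁺`. -/
theorem stmt_11 {V : Type*} [Fintype V] (G : SimpleGraph V) (A : V → V → Prop)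
    (hsub : ∀ u v : V, A u v → G.Adj u v)
    (hasym : IsOrientedGraph A) :
    (∃ D : V → V → Prop, IsOrientation G D ∧ (∀ u v : V, A u v → D u v) ∧
        IsLocalTournament D) ↔
    ((auxGraph G).Colorable 2 ∧
      ∃ C : (auxGraph G).Coloring Bool,
        ∀ x : EdgePair G, A x.1.1 x.1.2 → C x = true) := by
  classical
  constructor
  · rintro ⟨D, hO, hAD, hLT⟩
    have valid : ∀ {x y : EdgePair G}, (auxGraph G).Adj x y →
        (decide (D x.1.1 x.1.2)) ≠ (decide (D y.1.1 y.1.2)) := by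
      intro x y h
      have hk := adj_key G D hO hLT h
      by_cases hx : D x.1.1 x.1.2 <;> by_cases hy : D y.1.1 y.1.2 <;> simp_all
    let C : (auxGraph G).Coloring Bool :=
      SimpleGraph.Coloring.mk (fun x => decide (D x.1.1 x.1.2)) valid
    refine ⟨?_, C, ?_⟩
    · simpa using C.colorable
    · intro x hx
      exact decide_eq_true (hAD _ _ hx)
  · rintro ⟨-, C, hC⟩
    set D : V → V → Prop := fun u v => ∃ h : G.Adj u v, C ⟨(u, v), h⟩ = true with hD
    have hadjpair : ∀ (u v : V) (h : G.Adj u v),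
        (auxGraph G).Adj ⟨(u, v), h⟩ ⟨(v, u), h.symm⟩ := by
      intro u v h
      rw [auxGraph, SimpleGraph.fromRel_adj]
      refine ⟨?_, Or.inl (Or.inr (Or.inr ⟨rfl, rfl⟩))⟩
      intro heq
      have : u = v := congrArg (fun p => p.1.1) heq
      exact h.ne this
    have hDasym : ∀ u v : V, D u v → ¬ D v u := by
      rintro u v ⟨h1, c1⟩ ⟨h2, c2⟩
      have := C.valid (hadjpair u v h1)
      rw [c1] at this
      have : C ⟨(v, u), h1.symm⟩ = C ⟨(v, u), h2⟩ := rfl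
      simp_all
    have htot : ∀ u v : V, G.Adj u v → D u v ∨ D v u := by
      intro u v h
      have hne := C.valid (hadjpair u v h)
      cases hcx : C ⟨(u, v), h⟩ with
      | true => exact Or.inl ⟨h, hcx⟩
      | false =>
        refine Or.inr ⟨h.symm, ?_⟩
        rw [hcx] at hne
        cases hcy : C ⟨(v, u), h.symm⟩ with
        | true => rfl
        | false => rw [hcy] at hne; exact absurd rfl hne
    have hout : ∀ v x y : V, D v x → D v y → x ≠ y → D x y ∨ D y x := by
      rintro v x y ⟨h1, c1⟩ ⟨h2, c2⟩ hxy
      by_cases hadj : G.Adj x y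
      · exact htot x y hadj
      · exfalso
        have hadj' : (auxGraph G).Adj ⟨(v, x), h1⟩ ⟨(v, y), h2⟩ := by
          rw [auxGraph, SimpleGraph.fromRel_adj]
          refine ⟨?_, Or.inl (Or.inl ⟨rfl, hadj⟩)⟩
          intro heq
          exact hxy (congrArg (fun p => p.1.2) heq)
        have := C.valid hadj'
        rw [c1, c2] at this
        exact this rfl
    have hin : ∀ v x y : V, D x v → D y v → x ≠ y → D x y ∨ D y x := by
      rintro v x y ⟨h1, c1⟩ ⟨h2, c2⟩ hxy
      by_cases hadj : G.Adj x y
      · exact htot x y hadj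
      · exfalso
        have hadj' : (auxGraph G).Adj ⟨(x, v), h1⟩ ⟨(y, v), h2⟩ := by
          rw [auxGraph, SimpleGraph.fromRel_adj]
          refine ⟨?_, Or.inl (Or.inr (Or.inl ⟨hadj, rfl⟩))⟩
          intro heq
          exact hxy (congrArg (fun p => p.1.1) heq)
        have := C.valid hadj'
        rw [c1, c2] at this
        exact this rfl
    refine ⟨D, ⟨fun u v h => h.1, hDasym, htot⟩, ?_, hDasym, hout, hin⟩
    intro u v h
    exact ⟨hsub u v h, hC ⟨(u, v), hsub u v h⟩ h⟩
end
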